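/- arXiv:2002.07144 — 8 statements merged into one kernel-verified Lean document; each statement's English description precedes it below -/
import Mathlib

section
/- Let X, Y, Z be finite sets of the same cardinality and f : X → Y, g : Y → Z functions. Then there exist bijections h : Y → Z and h̃ : X → Y with h ∘ f = g ∘ h̃ if and only if there exists a bijection h : Y → Z such that |f⁻¹(y)| = |g⁻¹(h(y))| for all y ∈ Y. -/
theorem pseudoconjugate_iff_fiber_sizes_match
    {X Y Z : Type*} [Fintype X] [Fintype Y] [Fintype Z]
    [DecidableEq Y] [DecidableEq Z]
    (hXY : Fintype.card X = Fintype.card Y) (hYZ : Fintype.card Y = Fintype.card Z)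
    (f : X → Y) (g : Y → Z) :
    (∃ (h : Y ≃ Z) (h' : X ≃ Y), ∀ x : X, h (f x) = g (h' x)) ↔
      (∃ h : Y ≃ Z, ∀ y : Y,
        (Finset.univ.filter fun x => f x = y).card =
          (Finset.univ.filter fun y' => g y' = h y).card) := by
  constructor
  · rintro ⟨h, h', hc⟩
    refine ⟨h, fun y => ?_⟩
    apply Finset.card_bij (fun x _ => h' x)
    · intro x hx
      simp only [Finset.mem_filter, Finset.mem_univ, true_and] at hx ⊢
      rw [← hc, hx]
    · intro a _ b _ hab
      exact h'.injective hab
    · intro y' hy'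
      simp only [Finset.mem_filter, Finset.mem_univ, true_and] at hy'
      refine ⟨h'.symm y', ?_, by simp⟩
      simp only [Finset.mem_filter, Finset.mem_univ, true_and]
      apply h.injective
      rw [hc, Equiv.apply_symm_apply, hy']
  · rintro ⟨h, hc⟩
    have e2 : ∀ y : Y, {x // f x = y} ≃ {y' // g y' = h y} := fun y =>
      Fintype.equivOfCardEq (by
        simp only [Fintype.card_subtype]
        exact hc y)
    let e : X ≃ Y :=
      (Equiv.sigmaFiberEquiv f).symm.trans
        ((Equiv.sigmaCongrRight e2).trans
          ((Equiv.sigmaCongrLeft (β := fun z => {y' // g y' = z}) h).trans (Equiv.sigmaFiberEquiv g)))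
    refine ⟨h, e, fun x => ?_⟩
    have : e x = (e2 (f x) ⟨x, rfl⟩ : {y' // g y' = h (f x)}).1 := rfl
    rw [this, (e2 (f x) ⟨x, rfl⟩).2]
end

section
/- For any function f : X → X on a finite set and any positive integer k, deg(f^k) ≥ deg(f), i.e., Σ_{y∈X} |(f^k)⁻¹(y)|² ≥ Σ_{y∈X} |f⁻¹(y)|². -/
open Finset

lemma sum_sq_le_sq_sum {X : Type*} (s : Finset X) (a : X → ℕ) :
    ∑ z ∈ s, a z ^ 2 ≤ (∑ z ∈ s, a z) ^ 2 := by
  rw [sq]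
  calc ∑ z ∈ s, a z ^ 2 ≤ ∑ z ∈ s, a z * ∑ w ∈ s, a w := by
        apply Finset.sum_le_sum
        intro z hz
        rw [sq]
        exact Nat.mul_le_mul_left _ (Finset.single_le_sum (fun _ _ => Nat.zero_le _) hz)
    _ = (∑ z ∈ s, a z) * ∑ w ∈ s, a w := by rw [Finset.sum_mul]

lemma comp_sum_sq_ge {X : Type*} [Fintype X] [DecidableEq X] (f g : X → X) :
    ∑ y : X, (Finset.univ.filter fun x => f x = y).card ^ 2 ≤
      ∑ y : X, (Finset.univ.filter fun x => g (f x) = y).card ^ 2 := by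
  have h1 : ∀ y : X, (Finset.univ.filter fun x => g (f x) = y).card =
      ∑ z ∈ Finset.univ.filter (fun z => g z = y),
        (Finset.univ.filter fun x => f x = z).card := by
    intro y
    rw [Finset.card_eq_sum_card_fiberwise (f := f)
      (t := Finset.univ.filter fun z => g z = y)
      (by intro x hx; simp_all)]
    apply Finset.sum_congr rfl
    intro z hz
    simp only [Finset.mem_filter, Finset.mem_univ, true_and] at hz
    congr 1
    ext x
    simp only [Finset.mem_filter, Finset.mem_univ, true_and]
    constructor
    · rintro ⟨_, h⟩; exact h
    · intro h; exact ⟨by rw [h, hz], h⟩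
  simp only [h1]
  have h2 : ∑ y : X, (Finset.univ.filter fun x => f x = y).card ^ 2 =
      ∑ y : X, ∑ z ∈ Finset.univ.filter (fun z => g z = y),
        (Finset.univ.filter fun x => f x = z).card ^ 2 := by
    rw [Finset.sum_fiberwise (g := g)
      (f := fun z => (Finset.univ.filter fun x => f x = z).card ^ 2)]
  rw [h2]
  exact Finset.sum_le_sum fun y _ => sum_sq_le_sq_sum _ _

theorem sum_sq_fibers_iterate_ge
    {X : Type*} [Fintype X] [DecidableEq X] (f : X → X) (k : ℕ) (hk : 1 ≤ k) :
    ∑ y : X, (Finset.univ.filter fun x => f x = y).card ^ 2 ≤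
      ∑ y : X, (Finset.univ.filter fun x => f^[k] x = y).card ^ 2 := by
  obtain ⟨n, rfl⟩ := Nat.exists_eq_add_of_le hk
  simp only [Function.iterate_succ_apply, Nat.add_comm 1 n] at *
  simpa [Function.iterate_succ_apply] using comp_sum_sq_ge f (f^[n])
end

section
/- For any functions f, g : X → X on a finite nonempty set X of size n, deg(f ∘ g) ≤ √n · √(deg(f)) · deg(g). Equivalently, (Σ_{z} |(f∘g)⁻¹(z)|²)² ≤ n · (Σ_{y} |f⁻¹(y)|²) · (Σ_{y} |g⁻¹(y)|²)². -/
/-- The degree of noninvertibility of `f : X → X`, as a real number. -/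
noncomputable def degree {X : Type*} [Fintype X] [DecidableEq X] (f : X → X) : ℝ :=
  (∑ y : X, ((Finset.univ.filter fun x => f x = y).card : ℝ) ^ 2) / Fintype.card X

theorem deg_comp_le_sqrt_mul
    {X : Type*} [Fintype X] [DecidableEq X] [Nonempty X] (f g : X → X) :
    degree (f ∘ g) ≤
      Real.sqrt (Fintype.card X) * Real.sqrt (degree f) * degree g := by
  classical
  set n : ℝ := (Fintype.card X : ℝ) with hn_def
  have hn : (0:ℝ) < n := by
    simp only [hn_def, Nat.cast_pos]
    exact Fintype.card_pos
  set a : X → ℝ := fun z => ((Finset.univ.filter fun x => f x = z).card : ℝ) with ha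
  set b : X → ℝ := fun y => ((Finset.univ.filter fun x => g x = y).card : ℝ) with hb
  set c : X → ℝ := fun z => ∑ y ∈ Finset.univ.filter fun y => f y = z, (b y) ^ 2 with hc
  have hb_nonneg : ∀ y, 0 ≤ b y := fun y => Nat.cast_nonneg _
  have ha_nonneg : ∀ z, 0 ≤ a z := fun z => Nat.cast_nonneg _
  have hc_nonneg : ∀ z, 0 ≤ c z := fun z =>
    Finset.sum_nonneg fun y _ => sq_nonneg _
  -- key fiber decomposition
  have key : ∀ z, ((Finset.univ.filter fun x => (f ∘ g) x = z).card : ℝ)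
      = ∑ y ∈ Finset.univ.filter fun y => f y = z, b y := by
    intro z
    have : (Finset.univ.filter fun x => (f ∘ g) x = z)
        = (Finset.univ.filter fun y => f y = z).biUnion
          (fun y => Finset.univ.filter fun x => g x = y) := by
      ext x
      simp [Function.comp]
    rw [this, Finset.card_biUnion]
    · push_cast; rfl
    · intro y₁ h₁ y₂ h₂ hne
      simp only [Finset.disjoint_left, Finset.mem_filter, Finset.mem_univ, true_and]
      rintro x rfl h
      exact hne h
  -- Step A: pointwise Cauchy-Schwarz
  have stepA : ∀ z, ((Finset.univ.filter fun x => (f ∘ g) x = z).card : ℝ) ^ 2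
      ≤ a z * c z := by
    intro z
    rw [key z]
    have := Finset.sum_mul_sq_le_sq_mul_sq (Finset.univ.filter fun y => f y = z)
      (fun _ => (1:ℝ)) b
    simpa [ha, hc, Finset.sum_const, mul_comm] using this
  -- Step B: global Cauchy-Schwarz
  have stepB : ∑ z : X, a z * c z ≤ Real.sqrt (∑ z : X, (a z) ^ 2) * ∑ z : X, c z := by
    have cs := Finset.sum_mul_sq_le_sq_mul_sq Finset.univ a c
    have h1 : ∑ z : X, a z * c z ≤ Real.sqrt ((∑ z : X, (a z) ^ 2) * ∑ z : X, (c z) ^ 2) := by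
      have hnn : 0 ≤ ∑ z : X, a z * c z :=
        Finset.sum_nonneg fun z _ => mul_nonneg (ha_nonneg z) (hc_nonneg z)
      calc ∑ z : X, a z * c z = Real.sqrt ((∑ z : X, a z * c z) ^ 2) := by
            rw [Real.sqrt_sq hnn]
        _ ≤ _ := Real.sqrt_le_sqrt cs
    calc ∑ z : X, a z * c z
        ≤ Real.sqrt ((∑ z : X, (a z) ^ 2) * ∑ z : X, (c z) ^ 2) := h1
      _ = Real.sqrt (∑ z : X, (a z) ^ 2) * Real.sqrt (∑ z : X, (c z) ^ 2) :=
          Real.sqrt_mul (Finset.sum_nonneg fun z _ => sq_nonneg _) _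
      _ ≤ Real.sqrt (∑ z : X, (a z) ^ 2) * ∑ z : X, c z := by
          apply mul_le_mul_of_nonneg_left _ (Real.sqrt_nonneg _)
          calc Real.sqrt (∑ z : X, (c z) ^ 2)
              ≤ Real.sqrt ((∑ z : X, c z) ^ 2) := by
                apply Real.sqrt_le_sqrt
                exact Finset.sum_sq_le_sq_sum_of_nonneg fun z _ => hc_nonneg z
            _ = ∑ z : X, c z := Real.sqrt_sq (Finset.sum_nonneg fun z _ => hc_nonneg z)
  -- Step D: total of c
  have stepD : ∑ z : X, c z = ∑ y : X, (b y) ^ 2 := by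
    simpa [hc] using Finset.sum_fiberwise Finset.univ f (fun y => (b y) ^ 2)
  -- combine
  have main : ∑ z : X, ((Finset.univ.filter fun x => (f ∘ g) x = z).card : ℝ) ^ 2
      ≤ Real.sqrt (∑ z : X, (a z) ^ 2) * ∑ y : X, (b y) ^ 2 := by
    calc ∑ z : X, ((Finset.univ.filter fun x => (f ∘ g) x = z).card : ℝ) ^ 2
        ≤ ∑ z : X, a z * c z := Finset.sum_le_sum fun z _ => stepA z
      _ ≤ Real.sqrt (∑ z : X, (a z) ^ 2) * ∑ z : X, c z := stepB
      _ = _ := by rw [stepD]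
  have hA : degree f = (∑ z : X, (a z) ^ 2) / n := rfl
  have hB : degree g = (∑ y : X, (b y) ^ 2) / n := rfl
  have hC : degree (f ∘ g)
      = (∑ z : X, ((Finset.univ.filter fun x => (f ∘ g) x = z).card : ℝ) ^ 2) / n := rfl
  rw [hA, hB, hC]
  have hsq : Real.sqrt ((∑ z : X, (a z) ^ 2) / n) = Real.sqrt (∑ z : X, (a z) ^ 2) / Real.sqrt n := by
    rw [Real.sqrt_div (Finset.sum_nonneg fun z _ => sq_nonneg _)]
  rw [hsq]
  have hsn : Real.sqrt n ≠ 0 := ne_of_gt (Real.sqrt_pos.mpr hn)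
  rw [mul_comm (Real.sqrt n), div_mul_cancel₀ _ hsn, mul_div_assoc']
  gcongr
end

section
/- For any functions f, g : X → X on a finite nonempty set X of size n, equality deg(f ∘ g) = √n · √(deg(f)) · deg(g) holds if and only if f is a constant function and g is a bijection. -/
open Finset

theorem deg_comp_eq_sqrt_mul_iff
    {X : Type*} [Fintype X] [DecidableEq X] [Nonempty X] (f g : X → X) :
    degree (f ∘ g) =
        Real.sqrt (Fintype.card X) * Real.sqrt (degree f) * degree g ↔
      (∃ c : X, ∀ x : X, f x = c) ∧ Function.Bijective g := by
  set n : ℕ := Fintype.card X with hn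
  have hn0 : 0 < (n : ℝ) := by exact_mod_cast (Fintype.card_pos : 0 < n)
  set A : X → ℝ := (fun z => ((univ.filter fun x => f x = z).card : ℝ)) with hA
  set B : X → ℝ := (fun y => ((univ.filter fun x => g x = y).card : ℝ)) with hB
  set C : X → ℝ := (fun z => ((univ.filter fun x => (f ∘ g) x = z).card : ℝ)) with hC
  have hA0 : ∀ z, 0 ≤ A z := fun z => Nat.cast_nonneg _
  have hB0 : ∀ y, 0 ≤ B y := fun y => Nat.cast_nonneg _
  set Sa : ℝ := ∑ z : X, A z ^ 2 with hSa
  set Sb : ℝ := ∑ y : X, B y ^ 2 with hSb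
  set Sc : ℝ := ∑ z : X, C z ^ 2 with hSc
  -- fiber decomposition of C
  have hCfib : ∀ z, C z = ∑ y ∈ univ.filter (fun y => f y = z), B y := by
    intro z
    have h1 : (univ.filter fun x => (f ∘ g) x = z).card
        = ∑ y ∈ univ.filter (fun y => f y = z),
            ((univ.filter fun x => (f ∘ g) x = z).filter fun x => g x = y).card :=
      Finset.card_eq_sum_card_fiberwise (fun x hx => by
        simp only [Finset.mem_coe, mem_filter, mem_univ, true_and, Function.comp] at hx ⊢
        exact hx)
    show ((univ.filter fun x => (f ∘ g) x = z).card : ℝ) = _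
    rw [h1, Nat.cast_sum]
    refine Finset.sum_congr rfl fun y hy => ?_
    simp only [mem_filter, mem_univ, true_and] at hy
    show _ = ((univ.filter fun x => g x = y).card : ℝ)
    congr 2
    ext x
    simp only [mem_filter, mem_univ, true_and, Function.comp]
    constructor
    · rintro ⟨-, h⟩; exact h
    · intro h; exact ⟨by rw [h, hy], h⟩
  -- sums of fiber cardinalities
  have hsum : ∀ h : X → X, ∑ y : X, ((univ.filter fun x => h x = y).card : ℝ) = n := by
    intro h
    rw [← Nat.cast_sum]
    have h1 := Finset.card_eq_sum_card_fiberwise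
      (f := h) (s := (univ : Finset X)) (t := (univ : Finset X)) (fun x _ => mem_univ _)
    rw [← h1, card_univ, hn]
  have hsumA : ∑ z : X, A z = n := hsum f
  have hsumB : ∑ y : X, B y = n := hsum g
  have hdegf : degree f = Sa / n := rfl
  have hdegg : degree g = Sb / n := rfl
  have hdegfg : degree (f ∘ g) = Sc / n := rfl
  have hSaN : (n : ℝ) ≤ Sa := by
    have h1 := sq_sum_le_card_mul_sum_sq (s := (univ : Finset X)) (f := A)
    rw [hsumA, card_univ, ← hn, ← hSa] at h1
    nlinarith
  have hSbN : (n : ℝ) ≤ Sb := by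
    have h1 := sq_sum_le_card_mul_sum_sq (s := (univ : Finset X)) (f := B)
    rw [hsumB, card_univ, ← hn, ← hSb] at h1
    nlinarith
  have hSa0 : 0 ≤ Sa := le_trans hn0.le hSaN
  -- key reduction of the equation
  have hRHS : Real.sqrt n * Real.sqrt (degree f) * degree g = Real.sqrt Sa * Sb / n := by
    rw [hdegf, hdegg, ← Real.sqrt_mul hn0.le, mul_div_cancel₀ _ hn0.ne', mul_div_assoc]
  have hiff : (degree (f ∘ g) =
      Real.sqrt n * Real.sqrt (degree f) * degree g) ↔ Sc = Real.sqrt Sa * Sb := by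
    rw [hdegfg, hRHS, div_eq_div_iff hn0.ne' hn0.ne']
    constructor
    · intro h; exact mul_right_cancel₀ hn0.ne' h
    · intro h; rw [h]
  rw [hiff]
  constructor
  · -- forward direction
    intro h
    set s : X → ℝ := (fun z => ∑ y ∈ univ.filter (fun y => f y = z), B y ^ 2) with hs
    have hs0 : ∀ z, 0 ≤ s z := fun z => Finset.sum_nonneg fun y _ => sq_nonneg _
    have hsums : ∑ z : X, s z = Sb :=
      Finset.sum_fiberwise_of_maps_to (fun x _ => mem_univ _) (fun y => B y ^ 2)
    have h1 : ∀ z, C z ^ 2 ≤ A z * s z := by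
      intro z
      rw [hCfib z]
      exact sq_sum_le_card_mul_sum_sq (s := univ.filter (fun y => f y = z)) (f := B)
    have h2 : Sc ≤ ∑ z : X, A z * s z := Finset.sum_le_sum fun z _ => h1 z
    have hAsnn : 0 ≤ ∑ z : X, A z * s z :=
      Finset.sum_nonneg fun z _ => mul_nonneg (hA0 z) (hs0 z)
    have h3 : (∑ z : X, A z * s z) ≤ Real.sqrt Sa * Real.sqrt (∑ z : X, s z ^ 2) := by
      have cs := Finset.sum_mul_sq_le_sq_mul_sq (univ : Finset X) A s
      calc (∑ z : X, A z * s z) = Real.sqrt ((∑ z : X, A z * s z) ^ 2) :=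
            (Real.sqrt_sq hAsnn).symm
        _ ≤ Real.sqrt (Sa * ∑ z : X, s z ^ 2) := Real.sqrt_le_sqrt cs
        _ = Real.sqrt Sa * Real.sqrt (∑ z : X, s z ^ 2) := Real.sqrt_mul hSa0 _
    have h4 : Real.sqrt (∑ z : X, s z ^ 2) ≤ Sb := by
      have hle : ∑ z : X, s z ^ 2 ≤ Sb ^ 2 := by
        rw [← hsums]
        exact Finset.sum_sq_le_sq_sum_of_nonneg fun z _ => hs0 z
      calc Real.sqrt (∑ z : X, s z ^ 2) ≤ Real.sqrt (Sb ^ 2) := Real.sqrt_le_sqrt hle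
        _ = Sb := Real.sqrt_sq (le_trans hn0.le hSbN)
    have hsqrtSa : 0 < Real.sqrt Sa := Real.sqrt_pos.2 (lt_of_lt_of_le hn0 hSaN)
    have h5 : Real.sqrt Sa * Real.sqrt (∑ z : X, s z ^ 2) ≤ Real.sqrt Sa * Sb :=
      mul_le_mul_of_nonneg_left h4 hsqrtSa.le
    have e1 : ∑ z : X, A z * s z = Real.sqrt Sa * Sb :=
      le_antisymm (h3.trans h5) (h ▸ h2)
    have e2 : Real.sqrt (∑ z : X, s z ^ 2) = Sb := by
      have he : Real.sqrt Sa * Real.sqrt (∑ z : X, s z ^ 2) = Real.sqrt Sa * Sb :=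
        le_antisymm h5 (by linarith)
      exact mul_left_cancel₀ hsqrtSa.ne' he
    have hsum_sq : ∑ z : X, s z ^ 2 = Sb ^ 2 := by
      have h' : Real.sqrt (∑ z : X, s z ^ 2) ^ 2 = ∑ z : X, s z ^ 2 :=
        Real.sq_sqrt (Finset.sum_nonneg fun (z : X) _ => sq_nonneg (s z))
      rw [e2] at h'
      linarith [h']
    -- one-point support of s
    have expand : (∑ z : X, s z) ^ 2
        = (∑ z : X, s z ^ 2) + ∑ z : X, s z * ∑ w ∈ univ.erase z, s w := by
      rw [sq, Finset.sum_mul, ← Finset.sum_add_distrib]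
      refine Finset.sum_congr rfl fun z _ => ?_
      rw [← Finset.add_sum_erase (univ : Finset X) s (mem_univ z), mul_add, sq]
    have hR0 : ∑ z : X, s z * ∑ w ∈ univ.erase z, s w = 0 := by
      rw [hsums] at expand
      linarith [expand, hsum_sq]
    have hterm : ∀ z, s z * ∑ w ∈ univ.erase z, s w = 0 := by
      intro z
      have h' := (Finset.sum_eq_zero_iff_of_nonneg (fun z _ =>
        mul_nonneg (hs0 z) (Finset.sum_nonneg fun w _ => hs0 w))).1 hR0
      exact h' z (mem_univ z)
    obtain ⟨z₀, hz₀⟩ : ∃ z, 0 < s z := by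
      by_contra hcon
      push_neg at hcon
      have h' : ∑ z : X, s z ≤ 0 := Finset.sum_nonpos fun z _ => hcon z
      rw [hsums] at h'
      linarith
    have hszero : ∀ z, z ≠ z₀ → s z = 0 := by
      intro z hz
      have h0 : ∑ w ∈ univ.erase z₀, s w = 0 := by
        rcases mul_eq_zero.1 (hterm z₀) with h' | h'
        · exact absurd h' hz₀.ne'
        · exact h'
      have h' := (Finset.sum_eq_zero_iff_of_nonneg (fun w _ => hs0 w)).1 h0
      exact h' z (Finset.mem_erase.2 ⟨hz, mem_univ z⟩)
    have hSbz : Sb = s z₀ := by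
      rw [← hsums]
      exact Finset.sum_eq_single z₀ (fun z _ hz => hszero z hz) (fun h' => absurd (mem_univ z₀) h')
    have hAs : ∑ z : X, A z * s z = A z₀ * s z₀ :=
      Finset.sum_eq_single z₀ (fun z _ hz => by rw [hszero z hz, mul_zero])
        (fun h' => absurd (mem_univ z₀) h')
    have hAz₀ : A z₀ = Real.sqrt Sa := by
      rw [hAs, hSbz] at e1
      exact mul_right_cancel₀ hz₀.ne' e1
    have hAsq : A z₀ ^ 2 = Sa := by rw [hAz₀, Real.sq_sqrt hSa0]
    have hAzero : ∀ z, z ≠ z₀ → A z = 0 := by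
      intro z hz
      have hsum0 : ∑ w ∈ univ.erase z₀, A w ^ 2 = 0 := by
        have h' : A z₀ ^ 2 + ∑ w ∈ univ.erase z₀, A w ^ 2 = Sa := by
          rw [hSa]
          exact Finset.add_sum_erase (univ : Finset X) (fun w => A w ^ 2) (mem_univ z₀)
        linarith [h', hAsq]
      have h' := (Finset.sum_eq_zero_iff_of_nonneg (fun w _ => sq_nonneg (A w))).1 hsum0
      have hz2 := h' z (Finset.mem_erase.2 ⟨hz, mem_univ z⟩)
      exact pow_eq_zero_iff two_ne_zero |>.1 hz2
    have hfc : ∀ x, f x = z₀ := by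
      intro x
      by_contra hx
      have h0 : A (f x) = 0 := hAzero (f x) hx
      have hpos : 0 < A (f x) := by
        have hmem : x ∈ univ.filter fun y => f y = f x := by simp
        have hcard := Finset.card_pos.2 ⟨x, hmem⟩
        show (0 : ℝ) < ((univ.filter fun y => f y = f x).card : ℝ)
        exact_mod_cast hcard
      linarith
    refine ⟨⟨z₀, hfc⟩, ?_⟩
    -- compute `Sb = n`
    have hAn : A z₀ = n := by
      show ((univ.filter fun x => f x = z₀).card : ℝ) = n
      rw [Finset.filter_true_of_mem (fun x _ => hfc x), card_univ, hn]
    have hsqrtSa_n : Real.sqrt Sa = n := by rw [← hAz₀, hAn]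
    have hCn : C z₀ = n := by
      show ((univ.filter fun x => (f ∘ g) x = z₀).card : ℝ) = n
      simp only [Function.comp_apply]
      rw [Finset.filter_true_of_mem (fun x _ => hfc (g x)), card_univ, hn]
    have hCz : ∀ z, z ≠ z₀ → C z = 0 := by
      intro z hz
      show ((univ.filter fun x => (f ∘ g) x = z).card : ℝ) = 0
      rw [Finset.filter_false_of_mem, Finset.card_empty, Nat.cast_zero]
      intro x _ h'
      exact hz (((hfc (g x)).symm.trans h').symm)
    have hScn : Sc = (n : ℝ) ^ 2 := by
      rw [hSc, Finset.sum_eq_single z₀ (fun z _ hz => by rw [hCz z hz]; ring)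
        (fun h' => absurd (mem_univ z₀) h'), hCn]
    have hSbn' : Sb = n := by
      rw [hScn, hsqrtSa_n] at h
      have h' : (n : ℝ) * Sb = (n : ℝ) * n := by rw [← h]; ring
      exact mul_left_cancel₀ hn0.ne' h'
    -- surjectivity of g from `∑ b = n` and `∑ b² = n`
    set b : X → ℕ := (fun y => (univ.filter fun x => g x = y).card) with hb
    have hsumb : ∑ y : X, b y = n := by
      have h1 := Finset.card_eq_sum_card_fiberwise
        (f := g) (s := (univ : Finset X)) (t := (univ : Finset X)) (fun x _ => mem_univ _)
      rw [card_univ, ← hn] at h1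
      exact h1.symm
    have hsumb2 : ∑ y : X, b y ^ 2 = n := by
      have h1 : ((∑ y : X, b y ^ 2 : ℕ) : ℝ) = (n : ℝ) := by
        push_cast
        exact hSbn'
      exact_mod_cast h1
    have hbeq : ∀ y : X, b y = b y ^ 2 := by
      have h' := (Finset.sum_eq_sum_iff_of_le
        (fun (y : X) _ => Nat.le_self_pow two_ne_zero (b y))).1
        (by rw [hsumb, hsumb2])
      exact fun y => h' y (mem_univ y)
    have hb1 : ∀ y : X, b y ≤ 1 := by
      intro y
      by_contra hy
      push_neg at hy
      have := hbeq y
      nlinarith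
    have hsurj : Function.Surjective g := by
      intro y
      by_contra hy
      push_neg at hy
      have hb0 : b y = 0 :=
        Finset.card_eq_zero.2 (Finset.filter_eq_empty_iff.2 fun {x} _ => hy x)
      have hlt : ∑ y' : X, b y' < ∑ _y' : X, 1 :=
        Finset.sum_lt_sum (fun i _ => hb1 i)
          ⟨y, mem_univ y, by rw [hb0]; exact Nat.zero_lt_one⟩
      rw [hsumb, ← Finset.card_eq_sum_ones, card_univ, ← hn] at hlt
      exact lt_irrefl _ hlt
    exact hsurj.bijective_of_finite
  · -- reverse direction
    rintro ⟨⟨c, hc⟩, hg⟩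
    have hAc : ∀ z, A z = if z = c then (n : ℝ) else 0 := by
      intro z
      by_cases hz : z = c
      · subst hz
        show ((univ.filter fun x => f x = z).card : ℝ) = _
        rw [if_pos rfl, Finset.filter_true_of_mem (fun x _ => hc x), card_univ, hn]
      · show ((univ.filter fun x => f x = z).card : ℝ) = _
        rw [if_neg hz, Finset.filter_false_of_mem, Finset.card_empty, Nat.cast_zero]
        intro x _ h'
        exact hz (((hc x).symm.trans h').symm)
    have hCc : ∀ z, C z = if z = c then (n : ℝ) else 0 := by
      intro z
      by_cases hz : z = c
      · subst hz
        show ((univ.filter fun x => (f ∘ g) x = z).card : ℝ) = _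
        rw [if_pos rfl]
        simp only [Function.comp_apply]
        rw [Finset.filter_true_of_mem (fun x _ => hc (g x)), card_univ, hn]
      · show ((univ.filter fun x => (f ∘ g) x = z).card : ℝ) = _
        rw [if_neg hz, Finset.filter_false_of_mem, Finset.card_empty, Nat.cast_zero]
        intro x _ h'
        exact hz (((hc (g x)).symm.trans h').symm)
    have hBy : ∀ y, B y = 1 := by
      intro y
      obtain ⟨x₀, hx₀⟩ := hg.2 y
      have hfB : (univ.filter fun x => g x = y) = {x₀} := by
        ext x
        simp only [mem_filter, mem_univ, true_and, mem_singleton]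
        constructor
        · intro hx; exact hg.1 (hx.trans hx₀.symm)
        · rintro rfl; exact hx₀
      show ((univ.filter fun x => g x = y).card : ℝ) = 1
      rw [hfB, Finset.card_singleton, Nat.cast_one]
    have hSav : Sa = (n : ℝ) ^ 2 := by
      rw [hSa, Finset.sum_eq_single c (fun z _ hz => by rw [hAc z, if_neg hz]; ring)
        (fun h' => absurd (mem_univ c) h'), hAc c, if_pos rfl]
    have hScv : Sc = (n : ℝ) ^ 2 := by
      rw [hSc, Finset.sum_eq_single c (fun z _ hz => by rw [hCc z, if_neg hz]; ring)
        (fun h' => absurd (mem_univ c) h'), hCc c, if_pos rfl]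
    have hSbv : Sb = n := by
      rw [hSb]
      rw [Finset.sum_congr rfl fun y _ => (by rw [hBy y]; ring : B y ^ 2 = 1)]
      rw [Finset.sum_const, card_univ, ← hn, nsmul_eq_mul, mul_one]
    rw [hScv, hSav, hSbv, Real.sqrt_sq hn0.le]
    ring
end

section
/- For any function f : X → X on a finite nonempty set X of size n and any integer k ≥ 1, deg(f^k) ≤ deg(f)^(2 - 1/2^(k-1)) · n^(1 - 1/2^(k-1)). -/
open Finset

lemma sum_sq_eq_degree_mul {X : Type*} [Fintype X] [DecidableEq X] [Nonempty X] (f : X → X) :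
    ∑ y : X, ((univ.filter fun x => f x = y).card : ℝ) ^ 2 = degree f * Fintype.card X := by
  have hn : (0:ℝ) < Fintype.card X := by positivity
  rw [degree, div_mul_cancel₀ _ hn.ne']

lemma degree_nonneg {X : Type*} [Fintype X] [DecidableEq X] (f : X → X) : 0 ≤ degree f := by
  unfold degree; positivity

lemma one_le_degree {X : Type*} [Fintype X] [DecidableEq X] [Nonempty X] (f : X → X) :
    1 ≤ degree f := by
  have hn : (0:ℝ) < Fintype.card X := by positivity
  rw [degree, le_div_iff₀ hn, one_mul]
  have h1 : (Fintype.card X : ℝ) = ∑ y : X, ((univ.filter fun x => f x = y).card : ℝ) := by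
    rw [← Nat.cast_sum]
    norm_cast
    exact card_eq_sum_card_fiberwise (fun x _ => mem_univ (f x))
  rw [h1]
  apply Finset.sum_le_sum
  intro y _
  rcases Nat.eq_zero_or_pos (univ.filter fun x => f x = y).card with h | h
  · rw [h]; norm_num
  · have h1 : (1:ℝ) ≤ ((univ.filter fun x => f x = y).card : ℝ) := by exact_mod_cast h
    nlinarith [h1]

lemma degree_comp_le {X : Type*} [Fintype X] [DecidableEq X] [Nonempty X] (f g : X → X) :
    degree (fun x => g (f x)) ≤
      degree f * Real.sqrt (Fintype.card X * degree g) := by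
  have hn : (0:ℝ) < Fintype.card X := by positivity
  obtain ⟨A, hA⟩ : ∃ A : X → ℝ, A = fun y => ((univ.filter fun x => f x = y).card : ℝ) :=
    ⟨_, rfl⟩
  obtain ⟨B, hB⟩ : ∃ B : X → ℝ, B = fun z => ((univ.filter fun y => g y = z).card : ℝ) :=
    ⟨_, rfl⟩
  obtain ⟨u, hu⟩ : ∃ u : X → ℝ, u = fun z => ∑ y ∈ univ.filter (fun y => g y = z), A y ^ 2 :=
    ⟨_, rfl⟩
  have hunn : ∀ z, 0 ≤ u z := by
    intro z
    simp only [hu]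
    exact Finset.sum_nonneg fun y _ => sq_nonneg _
  -- fiber of composition
  have hC : ∀ z : X, ((univ.filter fun x => g (f x) = z).card : ℝ)
      = ∑ y ∈ univ.filter (fun y => g y = z), A y := by
    intro z
    have h := card_eq_sum_card_fiberwise (f := f) (s := univ.filter fun x => g (f x) = z)
      (t := univ.filter fun y => g y = z)
      (fun x hx => by simp only [mem_coe, mem_filter, mem_univ, true_and] at hx ⊢; exact hx)
    rw [h]
    push_cast
    apply Finset.sum_congr rfl
    intro y hy
    simp only [mem_filter, mem_univ, true_and] at hy
    have hfib : (univ.filter fun x => g (f x) = z).filter (fun x => f x = y)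
        = univ.filter fun x => f x = y := by
      ext x
      simp only [mem_filter, mem_univ, true_and]
      exact ⟨fun h2 => h2.2, fun h2 => ⟨by rw [h2, hy], h2⟩⟩
    rw [hfib]
    simp only [hA]
  -- step 1 : Cauchy-Schwarz per fiber
  have h1 : ∀ z : X, ((univ.filter fun x => g (f x) = z).card : ℝ) ^ 2 ≤ B z * u z := by
    intro z
    rw [hC z]
    simp only [hB, hu]
    exact sq_sum_le_card_mul_sum_sq
  -- step 2 : Cauchy-Schwarz over z
  have h2 : (∑ z : X, B z * u z) ≤
      Real.sqrt (∑ z : X, B z ^ 2) * Real.sqrt (∑ z : X, u z ^ 2) := by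
    rw [← Real.sqrt_mul (by positivity)]
    exact Real.le_sqrt_of_sq_le (Finset.sum_mul_sq_le_sq_mul_sq univ B u)
  -- step 3 : bound ∑ u²
  have h3 : Real.sqrt (∑ z : X, u z ^ 2) ≤ ∑ y : X, A y ^ 2 := by
    have hsum : ∑ z : X, u z = ∑ y : X, A y ^ 2 := by
      simp only [hu]
      exact Finset.sum_fiberwise_of_maps_to (fun y _ => mem_univ (g y)) (fun y => A y ^ 2)
    have : ∑ z : X, u z ^ 2 ≤ (∑ z : X, u z) ^ 2 :=
      Finset.sum_sq_le_sq_sum_of_nonneg (fun z _ => hunn z)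
    calc Real.sqrt (∑ z : X, u z ^ 2) ≤ Real.sqrt ((∑ z : X, u z) ^ 2) :=
          Real.sqrt_le_sqrt this
      _ = ∑ z : X, u z := Real.sqrt_sq (Finset.sum_nonneg fun z _ => hunn z)
      _ = ∑ y : X, A y ^ 2 := hsum
  have hBsq : ∑ z : X, B z ^ 2 = degree g * Fintype.card X := by
    simp only [hB]; exact sum_sq_eq_degree_mul g
  have hAsq : ∑ y : X, A y ^ 2 = degree f * Fintype.card X := by
    simp only [hA]; exact sum_sq_eq_degree_mul f
  have main : ∑ z : X, ((univ.filter fun x => g (f x) = z).card : ℝ) ^ 2 ≤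
      degree f * Real.sqrt (Fintype.card X * degree g) * Fintype.card X := by
    calc ∑ z : X, ((univ.filter fun x => g (f x) = z).card : ℝ) ^ 2
        ≤ ∑ z : X, B z * u z := Finset.sum_le_sum fun z _ => h1 z
      _ ≤ Real.sqrt (∑ z : X, B z ^ 2) * Real.sqrt (∑ z : X, u z ^ 2) := h2
      _ ≤ Real.sqrt (∑ z : X, B z ^ 2) * (∑ y : X, A y ^ 2) := by
          gcongr
      _ = Real.sqrt (degree g * Fintype.card X) * (degree f * Fintype.card X) := by
          rw [hBsq, hAsq]
      _ = degree f * Real.sqrt (Fintype.card X * degree g) * Fintype.card X := by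
          rw [mul_comm (degree g) (Fintype.card X : ℝ)]; ring
  rw [degree, div_le_iff₀ hn]
  exact main

theorem deg_iterate_le
    {X : Type*} [Fintype X] [DecidableEq X] [Nonempty X] (f : X → X) (k : ℕ) (hk : 1 ≤ k) :
    degree (f^[k]) ≤
      degree f ^ ((2 : ℝ) - 1 / 2 ^ (k - 1)) *
        (Fintype.card X : ℝ) ^ ((1 : ℝ) - 1 / 2 ^ (k - 1)) := by
  have hn : (0:ℝ) < Fintype.card X := by positivity
  have hd : (0:ℝ) < degree f := lt_of_lt_of_le one_pos (one_le_degree f)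
  obtain ⟨m, rfl⟩ : ∃ m, k = m + 1 := ⟨k - 1, (Nat.succ_pred_eq_of_pos hk).symm⟩
  simp only [Nat.add_sub_cancel]
  clear hk
  induction m with
  | zero =>
    simp only [pow_zero, Function.iterate_one]
    norm_num
  | succ m ih =>
    have step : degree (f^[m+1+1]) ≤
        degree f * Real.sqrt (Fintype.card X * degree (f^[m+1])) := by
      have hit : f^[m+1+1] = fun x => f^[m+1] (f x) := by
        funext x
        rw [← Function.iterate_succ_apply]
      rw [hit]
      exact degree_comp_le f (f^[m+1])
    set D : ℝ := degree f with hD0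
    set N : ℝ := (Fintype.card X : ℝ) with hN0
    set e : ℝ := (2 : ℝ) - 1 / 2 ^ m with he
    set q : ℝ := (1 : ℝ) - 1 / 2 ^ m with hq
    have step2 : degree (f^[m+1+1]) ≤ D * Real.sqrt (N * (D ^ e * N ^ q)) :=
      step.trans (mul_le_mul_of_nonneg_left
        (Real.sqrt_le_sqrt (mul_le_mul_of_nonneg_left ih hn.le)) hd.le)
    refine step2.trans_eq ?_
    have hE : (2 : ℝ) - 1 / 2 ^ (m+1) = 1 + e * (1/2) := by
      rw [he, pow_succ]; ring
    have hQ : (1 : ℝ) - 1 / 2 ^ (m+1) = (1 + q) * (1/2) := by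
      rw [hq, pow_succ]; ring
    rw [hE, hQ]
    rw [show N * (D ^ e * N ^ q) = D ^ e * (N * N ^ q) by ring]
    rw [show N * N ^ q = N ^ (1 + q) by rw [Real.rpow_add hn, Real.rpow_one]]
    rw [Real.sqrt_eq_rpow,
      Real.mul_rpow (Real.rpow_nonneg hd.le e) (Real.rpow_nonneg hn.le _),
      ← Real.rpow_mul hd.le, ← Real.rpow_mul hn.le, ← mul_assoc]
    rw [show D * D ^ (e * (1/2)) = D ^ (1 + e * (1/2)) by
      rw [Real.rpow_add hd, Real.rpow_one]]
end

section
/- The bubble sort map B on permutations decreases each nonzero entry of the inversion table by 1: for every permutation σ ∈ S_n and every j ∈ [n], e_j(B(σ)) = max(0, e_j(σ) − 1), where e_j(π) is the number of entries of π appearing to the left of the value j that are greater than j. -/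
/-- One step of bubble sort: compare the entries in positions `i` and `i+1`
(0-indexed) and swap them if they form a descent. -/
def bubbleStep (n : ℕ) (i : ℕ) (π : Equiv.Perm (Fin n)) : Equiv.Perm (Fin n) :=
  if h : i + 1 < n then
    if π ⟨i + 1, h⟩ < π ⟨i, Nat.lt_of_succ_lt h⟩ then
      π * Equiv.swap ⟨i, Nat.lt_of_succ_lt h⟩ ⟨i + 1, h⟩
    else π
  else π

/-- The bubble sort map `B = t_{n-1} ∘ ⋯ ∘ t_1`. -/
def bubbleSort (n : ℕ) (π : Equiv.Perm (Fin n)) : Equiv.Perm (Fin n) :=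
  (List.range (n - 1)).foldl (fun σ i => bubbleStep n i σ) π

/-- `invEntry n π j` is the entry `e_j(π)` of the inversion table of `π`:
the number of entries of `π` appearing to the left of the value `j` that
are greater than `j`. -/
def invEntry (n : ℕ) (π : Equiv.Perm (Fin n)) (j : Fin n) : ℕ :=
  (Finset.univ.filter fun i : Fin n => i < π.symm j ∧ j < π i).card

namespace BubbleAux

variable {n : ℕ}

/-- Change of variables `i ↦ swap x y i` in the defining sum of `invEntry`. -/
lemma swap_card (π : Equiv.Perm (Fin n)) (x y j : Fin n) :
    invEntry n (π * Equiv.swap x y) j =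
      (Finset.univ.filter fun i : Fin n =>
        Equiv.swap x y i < Equiv.swap x y (π.symm j) ∧ j < π i).card := by
  unfold invEntry
  have h1 : (π * Equiv.swap x y).symm j = Equiv.swap x y (π.symm j) := by
    rw [Equiv.Perm.mul_def, Equiv.symm_trans_apply, Equiv.symm_swap]
  refine (Finset.card_equiv (Equiv.swap x y) fun i => ?_).symm
  simp only [Finset.mem_filter, Finset.mem_univ, true_and, h1,
    Equiv.Perm.mul_apply, Equiv.swap_apply_self]

/-- If the swapped descent pair is `(a, j)` with `a > j`, the entry `e_j`
drops by exactly one. -/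
lemma hit_card (k : ℕ) (h : k + 1 < n) (π : Equiv.Perm (Fin n)) (j : Fin n)
    (hs : π ⟨k+1, h⟩ < π ⟨k, Nat.lt_of_succ_lt h⟩) (hj : π ⟨k+1, h⟩ = j) :
    invEntry n (π * Equiv.swap ⟨k, Nat.lt_of_succ_lt h⟩ ⟨k+1, h⟩) j + 1 = invEntry n π j := by
  set x : Fin n := ⟨k, Nat.lt_of_succ_lt h⟩ with hx
  set y : Fin n := ⟨k+1, h⟩ with hy
  have hxy : x ≠ y := by simp [hx, hy, Fin.ext_iff]
  have hm : π.symm j = y := by rw [← hj]; exact π.symm_apply_apply y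
  rw [swap_card, hm, Equiv.swap_apply_right]
  unfold invEntry
  rw [hm]
  have hset : (Finset.univ.filter fun i : Fin n => i < y ∧ j < π i)
      = insert x (Finset.univ.filter fun i : Fin n => Equiv.swap x y i < x ∧ j < π i) := by
    ext i
    simp only [Finset.mem_filter, Finset.mem_univ, true_and, Finset.mem_insert]
    by_cases hik : i = x
    · subst hik
      constructor
      · intro _; exact Or.inl rfl
      · intro _
        refine ⟨by simp [hx, hy, Fin.lt_def], ?_⟩
        rw [← hj]; exact hs
    · by_cases hik1 : i = y
      · subst hik1
        simp only [lt_irrefl, false_and, false_iff]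
        rintro (hh | ⟨h1, -⟩)
        · exact hxy hh.symm
        · rw [Equiv.swap_apply_right] at h1; exact absurd h1 (lt_irrefl x)
      · rw [Equiv.swap_apply_of_ne_of_ne hik hik1]
        have hiv : (i : ℕ) ≠ k := fun hh => hik (Fin.ext hh)
        have : i < y ↔ i < x := by
          simp only [Fin.lt_def, hx, hy]; omega
        rw [this]
        tauto
  rw [hset, Finset.card_insert_of_notMem]
  simp only [Finset.mem_filter, Finset.mem_univ, true_and, not_and]
  intro h1
  rw [Equiv.swap_apply_left] at h1
  exact absurd h1 (by simp [hx, hy, Fin.lt_def])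

/-- If the value `j` is not the right element of the swapped descent pair,
the entry `e_j` is unchanged. -/
lemma miss_card (k : ℕ) (h : k + 1 < n) (π : Equiv.Perm (Fin n)) (j : Fin n)
    (hs : π ⟨k+1, h⟩ < π ⟨k, Nat.lt_of_succ_lt h⟩) (hj : π ⟨k+1, h⟩ ≠ j) :
    invEntry n (π * Equiv.swap ⟨k, Nat.lt_of_succ_lt h⟩ ⟨k+1, h⟩) j = invEntry n π j := by
  set x : Fin n := ⟨k, Nat.lt_of_succ_lt h⟩ with hx
  set y : Fin n := ⟨k+1, h⟩ with hy
  have hxy : x ≠ y := by simp [hx, hy, Fin.ext_iff]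
  have hmy : π.symm j ≠ y := fun hh => hj (by rw [← hh, π.apply_symm_apply])
  rw [swap_card]
  unfold invEntry
  congr 1
  by_cases hmx : π.symm j = x
  · have hpx : π x = j := by rw [← hmx, π.apply_symm_apply]
    rw [hmx, Equiv.swap_apply_left]
    ext i
    simp only [Finset.mem_filter, Finset.mem_univ, true_and]
    by_cases hik : i = x
    · subst hik
      simp only [Equiv.swap_apply_left]
      constructor
      · rintro ⟨h1, -⟩; exact absurd h1 (lt_irrefl y)
      · rintro ⟨h1, -⟩; exact absurd h1 (lt_irrefl x)
    · by_cases hik1 : i = y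
      · subst hik1
        simp only [Equiv.swap_apply_right]
        constructor
        · rintro ⟨-, h2⟩
          rw [hpx] at hs; exact absurd (lt_trans h2 hs) (lt_irrefl j)
        · rintro ⟨h1, -⟩
          exact absurd h1 (by simp [hx, hy, Fin.lt_def])
      · rw [Equiv.swap_apply_of_ne_of_ne hik hik1]
        have hiv : (i : ℕ) ≠ k := fun hh => hik (Fin.ext hh)
        have : i < y ↔ i < x := by simp only [Fin.lt_def, hx, hy]; omega
        rw [this]
  · rw [Equiv.swap_apply_of_ne_of_ne hmx hmy]
    set m := π.symm j with hmdef
    have hmk : (m : ℕ) ≠ k := fun hh => hmx (Fin.ext hh)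
    have hmk1 : (m : ℕ) ≠ k + 1 := fun hh => hmy (Fin.ext hh)
    ext i
    simp only [Finset.mem_filter, Finset.mem_univ, true_and]
    by_cases hik : i = x
    · subst hik
      rw [Equiv.swap_apply_left]
      have : y < m ↔ x < m := by simp only [Fin.lt_def, hx, hy]; omega
      rw [this]
    · by_cases hik1 : i = y
      · subst hik1
        rw [Equiv.swap_apply_right]
        have : x < m ↔ y < m := by simp only [Fin.lt_def, hx, hy]; omega
        rw [this]
      · rw [Equiv.swap_apply_of_ne_of_ne hik hik1]

/-- Partial bubble pass: the first `k` comparison steps. -/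
def P (n : ℕ) (σ : Equiv.Perm (Fin n)) (k : ℕ) : Equiv.Perm (Fin n) :=
  (List.range k).foldl (fun τ i => bubbleStep n i τ) σ

lemma P_zero (σ : Equiv.Perm (Fin n)) : P n σ 0 = σ := rfl

lemma P_succ (σ : Equiv.Perm (Fin n)) (k : ℕ) :
    P n σ (k + 1) = bubbleStep n k (P n σ k) := by
  simp [P, List.range_succ]

lemma bubbleSort_eq_P (σ : Equiv.Perm (Fin n)) : bubbleSort n σ = P n σ (n - 1) := rfl

lemma bubbleStep_eq (k : ℕ) (h : k + 1 < n) (π : Equiv.Perm (Fin n)) :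
    bubbleStep n k π =
      if π ⟨k+1, h⟩ < π ⟨k, Nat.lt_of_succ_lt h⟩ then
        π * Equiv.swap ⟨k, Nat.lt_of_succ_lt h⟩ ⟨k+1, h⟩
      else π := by
  rw [bubbleStep, dif_pos h]

lemma bubbleStep_apply_of_ne (k : ℕ) (π : Equiv.Perm (Fin n)) (i : Fin n)
    (h1 : (i : ℕ) ≠ k) (h2 : (i : ℕ) ≠ k + 1) : bubbleStep n k π i = π i := by
  rw [bubbleStep]
  split_ifs with h hsw
  · rw [Equiv.Perm.mul_apply,
      Equiv.swap_apply_of_ne_of_ne (fun hh => h1 (by rw [hh])) (fun hh => h2 (by rw [hh]))]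
  · rfl
  · rfl

/-- Positions beyond the frontier are untouched by the partial pass. -/
lemma P_apply_of_lt (σ : Equiv.Perm (Fin n)) (k : ℕ) (i : Fin n) (hi : k < (i : ℕ)) :
    P n σ k i = σ i := by
  induction k with
  | zero => rfl
  | succ k ih =>
    rw [P_succ, bubbleStep_apply_of_ne k _ i (by omega) (by omega), ih (by omega)]

/-- The frontier position holds the prefix maximum. -/
lemma le_P_frontier (σ : Equiv.Perm (Fin n)) (k : ℕ) (hk : k < n) (i : Fin n)
    (hi : (i : ℕ) ≤ k) : σ i ≤ P n σ k ⟨k, hk⟩ := by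
  induction k with
  | zero =>
    have : i = ⟨0, hk⟩ := Fin.ext (by simp; omega)
    rw [this]; exact le_refl _
  | succ k ih =>
    have hk' : k < n := by omega
    have h : k + 1 < n := hk
    rw [P_succ, bubbleStep_eq k h]
    set π := P n σ k with hπ
    have hfr : π ⟨k+1, h⟩ = σ ⟨k+1, h⟩ := P_apply_of_lt σ k _ (by simp)
    split_ifs with hsw
    · rw [Equiv.Perm.mul_apply]
      have : Equiv.swap (⟨k, Nat.lt_of_succ_lt h⟩ : Fin n) ⟨k+1, h⟩ ⟨k+1, hk⟩
          = ⟨k, Nat.lt_of_succ_lt h⟩ :=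
        Equiv.swap_apply_right _ _
      rw [this]
      rcases Nat.lt_or_ge (i : ℕ) (k+1) with hik | hik
      · exact ih hk' (by omega)
      · have : i = ⟨k+1, h⟩ := Fin.ext (by simp; omega)
        rw [this, ← hfr]
        exact le_of_lt hsw
    · have hfr' : π ⟨k+1, hk⟩ = σ ⟨k+1, h⟩ := hfr
      rcases Nat.lt_or_ge (i : ℕ) (k+1) with hik | hik
      · exact le_trans (ih hk' (by omega)) (le_of_not_gt hsw)
      · have : i = ⟨k+1, h⟩ := Fin.ext (by simp; omega)
        rw [this, ← hfr']

/-- Main invariant: after `k` steps of the pass, `e_j` has dropped by one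
iff it was positive and the pass has already crossed the position of `j`. -/
lemma main_invariant (σ : Equiv.Perm (Fin n)) (j : Fin n) (k : ℕ) (hk : k < n) :
    invEntry n (P n σ k) j =
      if 0 < invEntry n σ j ∧ ((σ.symm j : Fin n) : ℕ) ≤ k then invEntry n σ j - 1
      else invEntry n σ j := by
  induction k with
  | zero =>
    rw [P_zero, if_neg]
    rintro ⟨hE, hq⟩
    unfold invEntry at hE
    obtain ⟨p, hp⟩ := Finset.card_pos.mp hE
    simp only [Finset.mem_filter, Finset.mem_univ, true_and] at hp
    have := hp.1
    rw [Fin.lt_def] at this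
    omega
  | succ k ih =>
    have hk' : k < n := by omega
    have h : k + 1 < n := hk
    rw [P_succ, bubbleStep_eq k h]
    set π := P n σ k with hπ
    have hfr : π ⟨k+1, h⟩ = σ ⟨k+1, h⟩ := P_apply_of_lt σ k _ (by simp)
    by_cases hsw : π ⟨k+1, h⟩ < π ⟨k, Nat.lt_of_succ_lt h⟩
    · rw [if_pos hsw]
      by_cases hj : π ⟨k+1, h⟩ = j
      · -- the hit step
        have hq : ((σ.symm j : Fin n) : ℕ) = k + 1 := by
          have h1 : σ ⟨k+1, h⟩ = j := by rw [← hfr]; exact hj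
          have h2 : σ.symm j = ⟨k+1, h⟩ := by rw [← h1, σ.symm_apply_apply]
          rw [h2]
        have hhit := hit_card k h π j hsw hj
        have hEk : invEntry n π j = invEntry n σ j := by
          rw [ih hk', if_neg]
          rintro ⟨-, h2⟩
          omega
        rw [hEk] at hhit
        rw [if_pos ⟨by omega, by omega⟩]
        omega
      · -- swap, but j not involved on the right
        rw [miss_card k h π j hsw hj, ih hk']
        have hq : ((σ.symm j : Fin n) : ℕ) ≠ k + 1 := by
          intro hh
          apply hj
          rw [hfr]
          have h2 : (⟨k+1, h⟩ : Fin n) = σ.symm j := Fin.ext (by simp; omega)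
          rw [h2, σ.apply_symm_apply]
        by_cases hc : 0 < invEntry n σ j ∧ ((σ.symm j : Fin n) : ℕ) ≤ k
        · rw [if_pos hc, if_pos ⟨hc.1, by omega⟩]
        · rw [if_neg hc, if_neg (fun hc2 => hc ⟨hc2.1, by omega⟩)]
    · -- no swap: j cannot sit at position k+1 with a larger element before it
      rw [if_neg hsw, ih hk']
      have hq : ¬(0 < invEntry n σ j ∧ ((σ.symm j : Fin n) : ℕ) = k + 1) := by
        rintro ⟨hE, hqq⟩
        unfold invEntry at hE
        obtain ⟨p, hp⟩ := Finset.card_pos.mp hE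
        simp only [Finset.mem_filter, Finset.mem_univ, true_and] at hp
        obtain ⟨hp1, hp2⟩ := hp
        rw [Fin.lt_def] at hp1
        have hpk : (p : ℕ) ≤ k := by omega
        have h1 : σ p ≤ π ⟨k, Nat.lt_of_succ_lt h⟩ := le_P_frontier σ k _ p hpk
        have h2 : π ⟨k+1, h⟩ = j := by
          rw [hfr]
          have h3 : (⟨k+1, h⟩ : Fin n) = σ.symm j := Fin.ext (by simp; omega)
          rw [h3, σ.apply_symm_apply]
        exact hsw (by rw [h2]; exact lt_of_lt_of_le hp2 h1)
      by_cases hc : 0 < invEntry n σ j ∧ ((σ.symm j : Fin n) : ℕ) ≤ k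
      · rw [if_pos hc, if_pos ⟨hc.1, by omega⟩]
      · rw [if_neg hc, if_neg]
        rintro ⟨h1, h2⟩
        rcases Nat.lt_or_ge ((σ.symm j : Fin n) : ℕ) (k+1) with h3 | h3
        · exact hc ⟨h1, by omega⟩
        · exact hq ⟨h1, by omega⟩

end BubbleAux

/-- Bubble sort decreases each nonzero entry of the inversion table by one
(truncated subtraction on `ℕ` realizes `max (0, e - 1)`). -/
theorem invEntry_bubbleSort (n : ℕ) (σ : Equiv.Perm (Fin n)) (j : Fin n) :
    invEntry n (bubbleSort n σ) j = invEntry n σ j - 1 := by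
  cases n with
  | zero => exact j.elim0
  | succ m =>
    rw [BubbleAux.bubbleSort_eq_P, Nat.succ_sub_one,
      BubbleAux.main_invariant σ j m (by omega)]
    have hq : ((σ.symm j : Fin (m+1)) : ℕ) ≤ m := by
      have := (σ.symm j).isLt; omega
    by_cases hE : 0 < invEntry (m+1) σ j
    · rw [if_pos ⟨hE, hq⟩]
    · rw [if_neg (fun hc => hE hc.1)]
      omega
end

section
/- For every permutation π of [n], the number of preimages of π under the bubble sort map B is 0 if π_n ≠ n, and equals 2^(ℓ−1) if π_n = n, where ℓ is the number of left-to-right maxima of π (entries j with e_j(π) = 0). -/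
/-- The number of left-to-right maxima of `π`. -/
def lmax (n : ℕ) (π : Equiv.Perm (Fin n)) : ℕ :=
  (Finset.univ.filter fun j : Fin n => invEntry n π j = 0).card

set_option maxHeartbeats 1000000
namespace BSAux

variable {n : ℕ}

/-- prefix maximum of the one-line word of `σ` up to position `k`. -/
def pmax (σ : Equiv.Perm (Fin (n+1))) (k : Fin (n+1)) : Fin (n+1) :=
  (Finset.Iic k).sup' Finset.nonempty_Iic σ

lemma le_pmax (σ : Equiv.Perm (Fin (n+1))) {i k : Fin (n+1)} (h : i ≤ k) :
    σ i ≤ pmax σ k :=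
  Finset.le_sup' σ (Finset.mem_Iic.2 h)

lemma pmax_le_iff (σ : Equiv.Perm (Fin (n+1))) {k m : Fin (n+1)} :
    pmax σ k ≤ m ↔ ∀ i ≤ k, σ i ≤ m := by
  simp [pmax, Finset.sup'_le_iff]

lemma exists_pmax (σ : Equiv.Perm (Fin (n+1))) (k : Fin (n+1)) :
    ∃ i ≤ k, pmax σ k = σ i := by
  obtain ⟨i, hi, h⟩ := Finset.exists_mem_eq_sup' (Finset.nonempty_Iic (a := k)) σ
  exact ⟨i, Finset.mem_Iic.1 hi, h⟩

lemma pmax_zero (σ : Equiv.Perm (Fin (n+1))) : pmax σ 0 = σ 0 := by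
  refine le_antisymm ((pmax_le_iff σ).2 fun i hi => ?_) (le_pmax σ le_rfl)
  rw [Fin.le_zero_iff] at hi
  rw [hi]

lemma pmax_mono (σ : Equiv.Perm (Fin (n+1))) {k l : Fin (n+1)} (h : k ≤ l) :
    pmax σ k ≤ pmax σ l :=
  (pmax_le_iff σ).2 fun i hi => le_pmax σ (le_trans hi h)

lemma pmax_succ (σ : Equiv.Perm (Fin (n+1))) (i : ℕ) (h : i + 1 < n + 1) :
    pmax σ ⟨i+1, h⟩ = max (pmax σ ⟨i, Nat.lt_of_succ_lt h⟩) (σ ⟨i+1, h⟩) := by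
  apply le_antisymm
  · rw [pmax_le_iff]
    intro x hx
    have hx' : (x:ℕ) ≤ i + 1 := hx
    rcases (by omega : (x:ℕ) ≤ i ∨ (x:ℕ) = i+1) with hx'' | hx''
    · exact le_trans (le_pmax σ (show x ≤ ⟨i, Nat.lt_of_succ_lt h⟩ from hx'')) (le_max_left _ _)
    · have hxe : x = ⟨i+1, h⟩ := Fin.ext hx''
      subst hxe; exact le_max_right _ _
  · exact max_le (pmax_mono σ (by simp [Fin.le_def])) (le_pmax σ le_rfl)

lemma foldl_invariant (σ : Equiv.Perm (Fin (n+1))) (k : ℕ) (hk : k ≤ n) :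
    (∀ i (h : i + 1 ≤ k),
      ((List.range k).foldl (fun σ i => bubbleStep (n+1) i σ) σ) ⟨i, by omega⟩
        = min (pmax σ ⟨i, by omega⟩) (σ ⟨i+1, by omega⟩))
    ∧ ((List.range k).foldl (fun σ i => bubbleStep (n+1) i σ) σ) ⟨k, by omega⟩
        = pmax σ ⟨k, by omega⟩
    ∧ (∀ i (h1 : k < i) (h2 : i ≤ n),
      ((List.range k).foldl (fun σ i => bubbleStep (n+1) i σ) σ) ⟨i, by omega⟩
        = σ ⟨i, by omega⟩) := by
  induction k with
  | zero =>
    refine ⟨by omega, ?_, fun i h1 h2 => rfl⟩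
    exact (pmax_zero σ).symm
  | succ k ih =>
    have hk' : k ≤ n := by omega
    obtain ⟨ha, hb, hc⟩ := ih hk'
    set τ := ((List.range k).foldl (fun σ i => bubbleStep (n+1) i σ) σ) with hτ
    have hfold : ((List.range (k+1)).foldl (fun σ i => bubbleStep (n+1) i σ) σ)
        = bubbleStep (n+1) k τ := by
      rw [List.range_succ, List.foldl_append, List.foldl_cons, List.foldl_nil]
    have hkn : k + 1 < n + 1 := by omega
    -- entries of bubbleStep (n+1) k τ
    have hstep : ∀ x : Fin (n+1),
        (bubbleStep (n+1) k τ) x =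
          if x = (⟨k, by omega⟩ : Fin (n+1)) then
            min (τ ⟨k, by omega⟩) (τ ⟨k+1, hkn⟩)
          else if x = (⟨k+1, hkn⟩ : Fin (n+1)) then
            max (τ ⟨k, by omega⟩) (τ ⟨k+1, hkn⟩)
          else τ x := by
      intro x
      rw [bubbleStep, dif_pos hkn]
      by_cases hlt : τ ⟨k+1, hkn⟩ < τ ⟨k, by omega⟩
      · rw [if_pos hlt]
        by_cases hx1 : x = (⟨k, by omega⟩ : Fin (n+1))
        · subst hx1
          rw [if_pos rfl]
          simp only [Equiv.Perm.mul_apply, Equiv.swap_apply_left]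
          rw [min_eq_right (le_of_lt hlt)]
        · by_cases hx2 : x = (⟨k+1, hkn⟩ : Fin (n+1))
          · subst hx2
            rw [if_neg hx1, if_pos rfl]
            simp only [Equiv.Perm.mul_apply, Equiv.swap_apply_right]
            rw [max_eq_left (le_of_lt hlt)]
          · rw [if_neg hx1, if_neg hx2]
            simp only [Equiv.Perm.mul_apply]
            rw [Equiv.swap_apply_of_ne_of_ne hx1 hx2]
      · rw [if_neg hlt]
        push_neg at hlt
        by_cases hx1 : x = (⟨k, by omega⟩ : Fin (n+1))
        · subst hx1; rw [if_pos rfl, min_eq_left hlt]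
        · by_cases hx2 : x = (⟨k+1, hkn⟩ : Fin (n+1))
          · subst hx2; rw [if_neg hx1, if_pos rfl, max_eq_right hlt]
          · rw [if_neg hx1, if_neg hx2]
    have hτk : τ ⟨k, by omega⟩ = pmax σ ⟨k, by omega⟩ := hb
    have hτk1 : τ ⟨k+1, hkn⟩ = σ ⟨k+1, hkn⟩ := hc (k+1) (by omega) (by omega)
    refine ⟨?_, ?_, ?_⟩
    · intro i h
      rw [hfold, hstep]
      by_cases hik : i = k
      · subst hik
        rw [if_pos rfl, hτk, hτk1]
      · rw [if_neg (by simp [Fin.ext_iff]; omega), if_neg (by simp [Fin.ext_iff]; omega)]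
        exact ha i (by omega)
    · rw [hfold, hstep, if_neg (by simp [Fin.ext_iff]), if_pos rfl, hτk, hτk1,
        pmax_succ σ k hkn]
    · intro i h1 h2
      rw [hfold, hstep, if_neg (by simp [Fin.ext_iff]; omega),
        if_neg (by simp [Fin.ext_iff]; omega)]
      exact hc i (by omega) h2

lemma bubbleSort_apply_lt (σ : Equiv.Perm (Fin (n+1))) (i : ℕ) (h : i < n) :
    bubbleSort (n+1) σ ⟨i, by omega⟩
      = min (pmax σ ⟨i, by omega⟩) (σ ⟨i+1, by omega⟩) := by
  have := (foldl_invariant σ n le_rfl).1 i (by omega)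
  simpa [bubbleSort] using this

lemma pmax_last (σ : Equiv.Perm (Fin (n+1))) : pmax σ (Fin.last n) = Fin.last n := by
  refine le_antisymm (Fin.le_last _) ?_
  calc Fin.last n = σ (σ.symm (Fin.last n)) := (σ.apply_symm_apply _).symm
    _ ≤ pmax σ (Fin.last n) := le_pmax σ (Fin.le_last _)

lemma bubbleSort_apply_last (σ : Equiv.Perm (Fin (n+1))) :
    bubbleSort (n+1) σ (Fin.last n) = Fin.last n := by
  have := (foldl_invariant σ n le_rfl).2.1
  rw [bubbleSort]
  simp only [Nat.add_sub_cancel]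
  have hl : (Fin.last n) = (⟨n, by omega⟩ : Fin (n+1)) := rfl
  rw [hl, this, ← hl, pmax_last]

end BSAux

namespace BSAux2
open BSAux

variable {n : ℕ}

lemma invEntry_last (σ : Equiv.Perm (Fin (n+1))) :
    invEntry (n+1) σ (Fin.last n) = 0 := by
  rw [invEntry, Finset.card_eq_zero, Finset.filter_eq_empty_iff]
  intro i _
  simp only [not_and, not_lt]
  exact fun _ => Fin.le_last _

lemma bubbleSort_apply_of_lt (σ : Equiv.Perm (Fin (n+1))) (i : Fin (n+1))
    (h : i < Fin.last n) :
    bubbleSort (n+1) σ i = min (pmax σ i) (σ (i+1)) := by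
  have h' : (i : ℕ) < n := h
  have h2 : ((i : ℕ) + 1) < n + 1 := by omega
  have := bubbleSort_apply_lt σ i.val h'
  have hi : (⟨(i:ℕ), by omega⟩ : Fin (n+1)) = i := by ext; rfl
  have hi1 : (⟨(i:ℕ)+1, h2⟩ : Fin (n+1)) = i + 1 := by
    ext; rw [Fin.val_add_one_of_lt h]
  rw [hi, hi1] at this
  exact this


/-- shift a positive index down by one. -/
def dec1 (x : Fin (n+1)) : Fin (n+1) :=
  ⟨(x:ℕ) - 1, Nat.lt_of_le_of_lt (Nat.sub_le _ _) x.isLt⟩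

/-- shift an index up by one (capped at `n`). -/
def inc1 (x : Fin (n+1)) : Fin (n+1) :=
  ⟨min ((x:ℕ)+1) n, Nat.lt_succ_of_le (min_le_right _ _)⟩

@[simp] lemma val_dec1 (x : Fin (n+1)) : (dec1 x : ℕ) = (x:ℕ) - 1 := rfl

@[simp] lemma val_inc1 (x : Fin (n+1)) : (inc1 x : ℕ) = min ((x:ℕ)+1) n := rfl

lemma invEntry_bubbleSort (σ : Equiv.Perm (Fin (n+1))) (j : Fin (n+1)) :
    invEntry (n+1) (bubbleSort (n+1) σ) j = invEntry (n+1) σ j - 1 := by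
  by_cases hj : j = Fin.last n
  · subst hj; rw [invEntry_last, invEntry_last]
  have hjlt : j < Fin.last n := lt_of_le_of_ne (Fin.le_last j) hj
  have hn : 0 < n := by
    rcases Nat.eq_zero_or_pos n with h | h
    · exfalso; subst h; exact hj (Fin.ext (by have := j.isLt; omega))
    · exact h
  set p := σ.symm j with hp
  have hσp : σ p = j := σ.apply_symm_apply j
  set B := bubbleSort (n+1) σ with hB
  set A : Finset (Fin (n+1)) := Finset.univ.filter fun i => i < p ∧ j < σ i with hA
  have hEσ : invEntry (n+1) σ j = A.card := rfl
  by_cases hcase : A.Nonempty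
  · -- Case A : e_j(σ) > 0
    set i₀ := A.min' hcase with hi₀
    have hi₀A : i₀ ∈ A := A.min'_mem hcase
    have hi₀p : i₀ < p := (Finset.mem_filter.1 hi₀A).2.1
    have hi₀σ : j < σ i₀ := (Finset.mem_filter.1 hi₀A).2.2
    have hp0 : 0 < (p : ℕ) := by have := Fin.lt_def.1 hi₀p; omega
    have hpn : (p : ℕ) ≤ n := by have := p.isLt; omega
    set p' : Fin (n+1) := ⟨(p:ℕ) - 1, by omega⟩ with hp'
    have hp'lt : p' < Fin.last n := by
      show (p:ℕ) - 1 < n; omega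
    have hp'1 : p' + 1 = p := by
      ext; rw [Fin.val_add_one_of_lt hp'lt]; simp only [hp']; omega
    have hi₀p' : i₀ ≤ p' := by
      rw [Fin.le_def]; have := Fin.lt_def.1 hi₀p; simp only [hp']; omega
    have hBp' : B p' = j := by
      rw [hB, bubbleSort_apply_of_lt σ p' hp'lt, hp'1, hσp]
      exact min_eq_right (le_of_lt (lt_of_lt_of_le hi₀σ (le_pmax σ hi₀p')))
    have hBsymm : B.symm j = p' := by rw [Equiv.symm_apply_eq]; exact hBp'.symm
    have hEB : invEntry (n+1) B j
        = (Finset.univ.filter fun i => i < p' ∧ j < B i).card := by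
      rw [invEntry, hBsymm]
    have key : (A.erase i₀).card
        = (Finset.univ.filter fun i => i < p' ∧ j < B i).card := by
      apply Finset.card_bij' (i := fun (q : Fin (n+1)) _ => dec1 q)
        (j := fun (i : Fin (n+1)) _ => inc1 i)
      · -- forward map lands in target
        intro q hq
        obtain ⟨hqne, hqA⟩ := Finset.mem_erase.1 hq
        obtain ⟨-, hqp, hqσ⟩ := Finset.mem_filter.1 hqA
        have hi₀q : i₀ < q := lt_of_le_of_ne (A.min'_le q hqA) (Ne.symm hqne)
        have h1 : 1 ≤ (q:ℕ) := by have := Fin.lt_def.1 hi₀q; omega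
        have hqp' : (q:ℕ) < (p:ℕ) := Fin.lt_def.1 hqp
        refine Finset.mem_filter.2 ⟨Finset.mem_univ _, ?_, ?_⟩
        · rw [Fin.lt_def, val_dec1]; simp only [hp']; omega
        · have hlt : dec1 q < Fin.last n := by
            rw [Fin.lt_def, val_dec1, Fin.val_last]; omega
          have hadd : dec1 q + 1 = q := by
            ext; rw [Fin.val_add_one_of_lt hlt, val_dec1]; omega
          rw [hB, bubbleSort_apply_of_lt σ _ hlt, hadd, lt_min_iff]
          refine ⟨lt_of_lt_of_le hi₀σ (le_pmax σ ?_), hqσ⟩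
          rw [Fin.le_def, val_dec1]; have := Fin.lt_def.1 hi₀q; omega
      · -- backward map lands in source
        intro i hi
        obtain ⟨-, hip', hiB⟩ := Finset.mem_filter.1 hi
        have hip'v : (i:ℕ) < (p:ℕ) - 1 := Fin.lt_def.1 hip'
        have hilast : i < Fin.last n := by
          rw [Fin.lt_def, Fin.val_last]; omega
        have hadd : inc1 i = i + 1 := by
          ext; rw [Fin.val_add_one_of_lt hilast, val_inc1]
          have : (i:ℕ) < n := hilast
          omega
        rw [hB, bubbleSort_apply_of_lt σ i hilast, lt_min_iff] at hiB
        obtain ⟨hipm, hiσ⟩ := hiB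
        obtain ⟨i', hi'le, hi'eq⟩ := exists_pmax σ i
        rw [hi'eq] at hipm
        have hi'A : i' ∈ A := by
          refine Finset.mem_filter.2 ⟨Finset.mem_univ _, ?_, hipm⟩
          rw [Fin.lt_def]; have := Fin.le_def.1 hi'le; omega
        have hi₀i : (i₀:ℕ) ≤ (i:ℕ) :=
          le_trans (Fin.le_def.1 (A.min'_le i' hi'A)) (Fin.le_def.1 hi'le)
        refine Finset.mem_erase.2 ⟨?_, Finset.mem_filter.2 ⟨Finset.mem_univ _, ?_, ?_⟩⟩
        · intro hcon
          have hv := congrArg Fin.val hcon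
          rw [val_inc1] at hv
          have : (i:ℕ) < n := hilast
          omega
        · rw [Fin.lt_def, val_inc1]
          have : (i:ℕ) < n := hilast
          omega
        · rw [hadd]; exact hiσ
      · intro q hq
        obtain ⟨hqne, hqA⟩ := Finset.mem_erase.1 hq
        obtain ⟨-, hqp, -⟩ := Finset.mem_filter.1 hqA
        have hi₀q : i₀ < q := lt_of_le_of_ne (A.min'_le q hqA) (Ne.symm hqne)
        have h1 : 1 ≤ (q:ℕ) := by have := Fin.lt_def.1 hi₀q; omega
        have hqn : (q:ℕ) ≤ n := by have := q.isLt; omega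
        ext; rw [val_inc1, val_dec1]; omega
      · intro i hi
        obtain ⟨-, hip', -⟩ := Finset.mem_filter.1 hi
        have hip'v : (i:ℕ) < (p:ℕ) - 1 := Fin.lt_def.1 hip'
        have : (i:ℕ) < n := by omega
        ext; rw [val_dec1, val_inc1]; omega
    rw [hEB, ← key, Finset.card_erase_of_mem hi₀A, hEσ]
  · -- Case B : e_j(σ) = 0
    have hA0 : A.card = 0 := by
      rw [Finset.card_eq_zero]; exact Finset.not_nonempty_iff_eq_empty.1 hcase
    rw [hEσ, hA0, Nat.zero_sub]
    have hnolt : ∀ i : Fin (n+1), i < p → σ i ≤ j := by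
      intro i hip
      by_contra h
      push_neg at h
      exact hcase ⟨i, Finset.mem_filter.2 ⟨Finset.mem_univ _, hip, h⟩⟩
    set D : Finset (Fin (n+1)) := Finset.univ.filter
      (fun i => p ≤ i ∧ i < Fin.last n ∧ j < σ (i+1)) with hD
    have hDne : D.Nonempty := by
      set r := σ.symm (Fin.last n) with hr
      have hσr : σ r = Fin.last n := σ.apply_symm_apply _
      have hrp : p < r := by
        rcases lt_trichotomy r p with h | h | h
        · exact absurd (hσr ▸ hnolt r h) (not_le.2 hjlt)
        · exfalso; rw [h, hσp] at hσr; exact hj hσr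
        · exact h
      have hr1 : 1 ≤ (r:ℕ) := by have := Fin.lt_def.1 hrp; omega
      have hrn : (r:ℕ) ≤ n := by have := r.isLt; omega
      refine ⟨⟨(r:ℕ)-1, by omega⟩, Finset.mem_filter.2 ⟨Finset.mem_univ _, ?_, ?_, ?_⟩⟩
      · rw [Fin.le_def]; simp only []; have := Fin.lt_def.1 hrp; omega
      · rw [Fin.lt_def]; simp only [Fin.val_last]; omega
      · have hlt : (⟨(r:ℕ)-1, by omega⟩ : Fin (n+1)) < Fin.last n := by
          rw [Fin.lt_def]; simp only [Fin.val_last]; omega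
        have hadd : (⟨(r:ℕ)-1, by omega⟩ : Fin (n+1)) + 1 = r := by
          ext; rw [Fin.val_add_one_of_lt hlt]; simp only []; omega
        rw [hadd, hσr]; exact hjlt
    set q := D.min' hDne with hq
    have hqD : q ∈ D := D.min'_mem hDne
    obtain ⟨-, hpq, hqlast, hjq1⟩ := Finset.mem_filter.1 hqD
    have hpmaxq : pmax σ q = j := by
      apply le_antisymm
      · rw [pmax_le_iff]
        intro i hiq
        rcases lt_trichotomy i p with h | h | h
        · exact hnolt i h
        · rw [h, hσp]
        · by_contra hgt
          push_neg at hgt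
          have hi1 : 1 ≤ (i:ℕ) := by have := Fin.lt_def.1 h; omega
          have hin : (i:ℕ) ≤ n := by have := i.isLt; omega
          have hiqv : (i:ℕ) ≤ (q:ℕ) := Fin.le_def.1 hiq
          have hqlv : (q:ℕ) < n := Fin.lt_def.1 hqlast
          have hlt : (⟨(i:ℕ)-1, by omega⟩ : Fin (n+1)) < Fin.last n := by
            rw [Fin.lt_def]; simp only [Fin.val_last]; omega
          have hadd : (⟨(i:ℕ)-1, by omega⟩ : Fin (n+1)) + 1 = i := by
            ext; rw [Fin.val_add_one_of_lt hlt]; simp only []; omega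
          have hi'D : (⟨(i:ℕ)-1, by omega⟩ : Fin (n+1)) ∈ D := by
            refine Finset.mem_filter.2 ⟨Finset.mem_univ _, ?_, hlt, ?_⟩
            · rw [Fin.le_def]; simp only []; have := Fin.lt_def.1 h; omega
            · rw [hadd]; exact hgt
          have := Fin.le_def.1 (D.min'_le _ hi'D)
          simp only [] at this
          omega
      · rw [← hσp]; exact le_pmax σ hpq
    have hBq : B q = j := by
      rw [hB, bubbleSort_apply_of_lt σ q hqlast, hpmaxq]
      exact min_eq_left (le_of_lt hjq1)
    have hBsymm : B.symm j = q := by rw [Equiv.symm_apply_eq]; exact hBq.symm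
    rw [invEntry, hBsymm, Finset.card_eq_zero, Finset.filter_eq_empty_iff]
    intro i _
    simp only [not_and, not_lt]
    intro hiq
    have hilast : i < Fin.last n := lt_trans hiq hqlast
    rw [hB, bubbleSort_apply_of_lt σ i hilast]
    exact le_trans (min_le_left _ _)
      (le_trans (pmax_mono σ (le_of_lt hiq)) (le_of_eq hpmaxq))

end BSAux2

namespace BSAux3
open BSAux

lemma invEntry_value_form {N : ℕ} (σ : Equiv.Perm (Fin N)) (j : Fin N) :
    invEntry N σ j
      = (Finset.univ.filter fun v : Fin N => j < v ∧ σ.symm v < σ.symm j).card := by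
  rw [invEntry]
  apply Finset.card_bij (fun i _ => σ i)
  · intro a ha
    obtain ⟨-, h1, h2⟩ := Finset.mem_filter.1 ha
    exact Finset.mem_filter.2 ⟨Finset.mem_univ _, h2, by
      rw [Equiv.symm_apply_apply]; exact h1⟩
  · exact fun a1 _ a2 _ h => σ.injective h
  · intro v hv
    obtain ⟨-, h1, h2⟩ := Finset.mem_filter.1 hv
    refine ⟨σ.symm v, Finset.mem_filter.2 ⟨Finset.mem_univ _, h2, ?_⟩,
      σ.apply_symm_apply v⟩
    rw [σ.apply_symm_apply]; exact h1

lemma filter_lt_card {N : ℕ} (c : Fin N) :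
    (Finset.univ.filter fun x : Fin N => x < c).card = (c:ℕ) := by
  have h : (Finset.univ.filter fun x : Fin N => x < c) = Finset.Iio c := by
    ext x; simp
  rw [h, Fin.card_Iio]

lemma invEntry_zero {N : ℕ} (σ : Equiv.Perm (Fin (N+1))) :
    invEntry (N+1) σ 0 = (σ.symm 0 : ℕ) := by
  rw [invEntry_value_form]
  rw [show (Finset.univ.filter fun v : Fin (N+1) => 0 < v ∧ σ.symm v < σ.symm 0)
      = Finset.univ.filter fun v : Fin (N+1) => σ.symm v < σ.symm 0 by
    ext v
    simp only [Finset.mem_filter, Finset.mem_univ, true_and, and_iff_right_iff_imp]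
    intro h
    rcases eq_or_ne v 0 with rfl | hv
    · exact absurd h (lt_irrefl _)
    · exact Fin.pos_of_ne_zero hv]
  rw [← filter_lt_card (σ.symm 0)]
  apply Finset.card_bij (fun v _ => σ.symm v)
  · intro a ha
    exact Finset.mem_filter.2 ⟨Finset.mem_univ _, (Finset.mem_filter.1 ha).2⟩
  · exact fun a1 _ a2 _ h => σ.symm.injective h
  · intro x hx
    exact ⟨σ x, Finset.mem_filter.2 ⟨Finset.mem_univ _, by
      rw [Equiv.symm_apply_apply]; exact (Finset.mem_filter.1 hx).2⟩,
      σ.symm_apply_apply x⟩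

variable {N : ℕ}

/-- delete the value `0` from the one-line notation of `σ` (working with the
position permutation `σ.symm`). -/
def peel (σ : Equiv.Perm (Fin (N+1))) : Equiv.Perm (Fin N) :=
  (Equiv.removeNone ((finSuccEquiv N).symm.trans
    (σ.symm.trans (finSuccEquiv' (σ.symm 0))))).symm

lemma peel_spec (σ : Equiv.Perm (Fin (N+1))) (v : Fin N) :
    σ.symm v.succ = (σ.symm 0).succAbove ((peel σ).symm v) := by
  set p := σ.symm 0 with hp
  set G := (finSuccEquiv N).symm.trans (σ.symm.trans (finSuccEquiv' p)) with hG
  have hGv : G (some v) = finSuccEquiv' p (σ.symm v.succ) := by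
    rw [hG, Equiv.trans_apply, Equiv.trans_apply, finSuccEquiv_symm_some]
  have hne : σ.symm v.succ ≠ p := by
    rw [hp]
    intro h
    exact (Fin.succ_ne_zero v) (σ.symm.injective h)
  obtain ⟨w, hw⟩ := Fin.exists_succAbove_eq hne
  have hex : ∃ x', G (some v) = some x' := by
    refine ⟨w, ?_⟩
    rw [hGv, ← hw, finSuccEquiv'_succAbove]
  have h1 : some (Equiv.removeNone G v) = G (some v) := Equiv.removeNone_some G hex
  have h2 : (peel σ).symm v = Equiv.removeNone G v := by
    rw [peel, Equiv.symm_symm]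
  rw [h2]
  have h3 : (finSuccEquiv' p).symm (some (Equiv.removeNone G v))
      = (finSuccEquiv' p).symm (G (some v)) := by rw [h1]
  rw [finSuccEquiv'_symm_some, hGv, Equiv.symm_apply_apply] at h3
  exact h3.symm

lemma invEntry_succ (σ : Equiv.Perm (Fin (N+1))) (j : Fin N) :
    invEntry (N+1) σ j.succ = invEntry N (peel σ) j := by
  rw [invEntry_value_form, invEntry_value_form]
  symm
  apply Finset.card_bij (fun (w : Fin N) _ => w.succ)
  · intro w hw
    obtain ⟨-, h1, h2⟩ := Finset.mem_filter.1 hw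
    refine Finset.mem_filter.2 ⟨Finset.mem_univ _, Fin.succ_lt_succ_iff.2 h1, ?_⟩
    rw [peel_spec, peel_spec]
    exact Fin.succAbove_lt_succAbove_iff.2 h2
  · exact fun a1 _ a2 _ h => Fin.succ_injective _ h
  · intro v hv
    obtain ⟨-, h1, h2⟩ := Finset.mem_filter.1 hv
    have hv0 : v ≠ 0 := by
      intro h
      subst h
      exact absurd h1 (Fin.not_lt_zero _)
    obtain ⟨w, rfl⟩ := Fin.exists_succ_eq.2 hv0
    refine ⟨w, Finset.mem_filter.2 ⟨Finset.mem_univ _,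
      Fin.succ_lt_succ_iff.1 h1, ?_⟩, rfl⟩
    rw [peel_spec, peel_spec] at h2
    exact Fin.succAbove_lt_succAbove_iff.1 h2

lemma code_injective : ∀ (N : ℕ) (σ τ : Equiv.Perm (Fin N)),
    (∀ j, invEntry N σ j = invEntry N τ j) → σ = τ := by
  intro N
  induction N with
  | zero => intro σ τ _; ext j; exact j.elim0
  | succ N ih =>
    intro σ τ h
    have h0 : σ.symm 0 = τ.symm 0 :=
      Fin.ext (by rw [← invEntry_zero, ← invEntry_zero, h])
    have hpeel : peel σ = peel τ := by
      apply ih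
      intro j
      rw [← invEntry_succ, ← invEntry_succ, h]
    have hsymm : ∀ v, σ.symm v = τ.symm v := by
      intro v
      induction v using Fin.cases with
      | zero => exact h0
      | succ w => rw [peel_spec, peel_spec, hpeel, h0]
    have heq : σ.symm = τ.symm := Equiv.ext hsymm
    calc σ = σ.symm.symm := (Equiv.symm_symm σ).symm
      _ = τ.symm.symm := by rw [heq]
      _ = τ := Equiv.symm_symm τ

end BSAux3

namespace BSAux4
open BSAux BSAux3

export BSAux2 (invEntry_last invEntry_bubbleSort)

variable {n : ℕ}

lemma invEntry_bound (σ : Equiv.Perm (Fin (n+1))) (j : Fin (n+1)) :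
    invEntry (n+1) σ j + (j:ℕ) ≤ n := by
  have hsub : (Finset.univ.filter fun v : Fin (n+1) => j < v ∧ σ.symm v < σ.symm j)
      ⊆ Finset.univ.filter fun v : Fin (n+1) => j < v := by
    intro x hx
    exact Finset.mem_filter.2 ⟨Finset.mem_univ _, (Finset.mem_filter.1 hx).2.1⟩
  have hIoi : (Finset.univ.filter fun v : Fin (n+1) => j < v) = Finset.Ioi j := by
    ext v; simp
  have hcard := Finset.card_le_card hsub
  rw [hIoi, Fin.card_Ioi] at hcard
  rw [invEntry_value_form]
  have hj : (j:ℕ) ≤ n := by have := j.isLt; omega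
  omega

/-- the inversion table as a function `Fin (n+1) → Fin (n+1)`. -/
def code (σ : Equiv.Perm (Fin (n+1))) : Fin (n+1) → Fin (n+1) :=
  fun j => ⟨invEntry (n+1) σ j, by
    have := invEntry_bound σ j; omega⟩

lemma code_inj : Function.Injective (code (n := n)) := by
  intro σ τ h
  apply code_injective
  intro j
  have := congrFun h j
  exact congrArg Fin.val this

/-- the set of admissible inversion tables. -/
def S (n : ℕ) : Finset (Fin (n+1) → Fin (n+1)) :=
  Finset.univ.filter fun f => ∀ j : Fin (n+1), (f j : ℕ) + (j:ℕ) ≤ n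

lemma card_S : (S n).card = Nat.factorial (n+1) := by
  classical
  rw [S, ← Fintype.card_subtype]
  rw [Fintype.card_congr (Equiv.subtypePiEquivPi
    (p := fun (j : Fin (n+1)) (x : Fin (n+1)) => (x : ℕ) + (j:ℕ) ≤ n))]
  rw [Fintype.card_pi]
  have hcard : ∀ j : Fin (n+1),
      Fintype.card {x : Fin (n+1) // (x:ℕ) + (j:ℕ) ≤ n} = n - (j:ℕ) + 1 := by
    intro j
    rw [Fintype.card_subtype]
    have h : (Finset.univ.filter fun x : Fin (n+1) => (x:ℕ) + (j:ℕ) ≤ n)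
        = Finset.Iic (⟨n - (j:ℕ), by omega⟩ : Fin (n+1)) := by
      ext x
      simp only [Finset.mem_filter, Finset.mem_univ, true_and, Finset.mem_Iic,
        Fin.le_def]
      have := j.isLt
      omega
    rw [h, Fin.card_Iic]
  calc ∏ j : Fin (n+1), Fintype.card {x : Fin (n+1) // (x:ℕ) + (j:ℕ) ≤ n}
      = ∏ j : Fin (n+1), (n - (j:ℕ) + 1) := by
        exact Finset.prod_congr rfl fun j _ => hcard j
    _ = ∏ i ∈ Finset.range (n+1), (n - i + 1) := by
        rw [Finset.prod_range]
    _ = ∏ i ∈ Finset.range (n+1), (i + 1) := by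
        have := Finset.prod_range_reflect (fun i => i + 1) (n+1)
        simpa using this
    _ = Nat.factorial (n+1) := Finset.prod_range_add_one_eq_factorial (n+1)

lemma code_mem_S (σ : Equiv.Perm (Fin (n+1))) : code σ ∈ S n :=
  Finset.mem_filter.2 ⟨Finset.mem_univ _, fun j => invEntry_bound σ j⟩

lemma code_surj : ∀ f ∈ S n, ∃ σ : Equiv.Perm (Fin (n+1)), code σ = f := by
  classical
  have himg : Finset.univ.image (code (n := n)) = S n := by
    apply Finset.eq_of_subset_of_card_le
    · intro f hf
      obtain ⟨σ, -, rfl⟩ := Finset.mem_image.1 hf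
      exact code_mem_S σ
    · have h1 : (Finset.univ.image (code (n := n))).card = Nat.factorial (n+1) := by
        rw [Finset.card_image_of_injective _ code_inj, Finset.card_univ,
          Fintype.card_perm, Fintype.card_fin]
      rw [h1, card_S]
  intro f hf
  rw [← himg] at hf
  obtain ⟨σ, -, h⟩ := Finset.mem_image.1 hf
  exact ⟨σ, h⟩

end BSAux4

namespace BSMain
open BSAux BSAux3 BSAux4

export BSAux2 (invEntry_last invEntry_bubbleSort bubbleSort_apply_of_lt)

variable {n : ℕ}

lemma tight_bound {π : Equiv.Perm (Fin (n+1))} (h : π (Fin.last n) = Fin.last n)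
    (j : Fin (n+1)) (hne : invEntry (n+1) π j ≠ 0) :
    invEntry (n+1) π j + (j:ℕ) + 1 ≤ n := by
  have hsymm : π.symm (Fin.last n) = Fin.last n :=
    (Equiv.symm_apply_eq π).2 h.symm
  have hb := invEntry_bound π j
  by_contra hc
  push_neg at hc
  have hsub : (Finset.univ.filter fun v : Fin (n+1) => j < v ∧ π.symm v < π.symm j)
      ⊆ Finset.univ.filter fun v : Fin (n+1) => j < v := by
    intro x hx
    exact Finset.mem_filter.2 ⟨Finset.mem_univ _, (Finset.mem_filter.1 hx).2.1⟩
  have hIoi : (Finset.univ.filter fun v : Fin (n+1) => j < v) = Finset.Ioi j := by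
    ext v; simp
  have hcard2 : (Finset.univ.filter fun v : Fin (n+1) => j < v).card = n - (j:ℕ) := by
    rw [hIoi, Fin.card_Ioi]
    omega
  have hval : invEntry (n+1) π j
      = (Finset.univ.filter fun v : Fin (n+1) => j < v ∧ π.symm v < π.symm j).card :=
    invEntry_value_form π j
  have heq : (Finset.univ.filter fun v : Fin (n+1) => j < v ∧ π.symm v < π.symm j)
      = Finset.univ.filter fun v : Fin (n+1) => j < v := by
    apply Finset.eq_of_subset_of_card_le hsub
    rw [hcard2, ← hval]
    omega
  have hjlast : j < Fin.last n := by
    rcases lt_or_eq_of_le (Fin.le_last j) with hh | hh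
    · exact hh
    · exact absurd (hh ▸ invEntry_last π) hne
  have hmem : Fin.last n ∈ Finset.univ.filter fun v : Fin (n+1) => j < v :=
    Finset.mem_filter.2 ⟨Finset.mem_univ _, hjlast⟩
  rw [← heq] at hmem
  have := (Finset.mem_filter.1 hmem).2.2
  rw [hsymm] at this
  exact absurd this (not_lt.2 (Fin.le_last _))

lemma per_coord_card {π : Equiv.Perm (Fin (n+1))} (h : π (Fin.last n) = Fin.last n)
    (j : Fin (n+1)) :
    (Finset.univ.filter fun x : Fin (n+1) =>
        (x:ℕ) + (j:ℕ) ≤ n ∧ (x:ℕ) - 1 = invEntry (n+1) π j).card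
      = if invEntry (n+1) π j = 0 ∧ j ≠ Fin.last n then 2 else 1 := by
  by_cases he : invEntry (n+1) π j = 0
  · by_cases hl : j = Fin.last n
    · rw [if_neg (by tauto)]
      subst hl
      have hset : (Finset.univ.filter fun x : Fin (n+1) =>
          (x:ℕ) + ((Fin.last n):ℕ) ≤ n ∧ (x:ℕ) - 1 = invEntry (n+1) π (Fin.last n))
          = {(0 : Fin (n+1))} := by
        ext x
        simp only [Finset.mem_filter, Finset.mem_univ, true_and, Finset.mem_singleton,
          Fin.val_last, he]
        constructor
        · intro ⟨h1, _⟩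
          ext
          simp only [Fin.val_zero]
          omega
        · intro hx
          subst hx
          simp
      rw [hset, Finset.card_singleton]
    · rw [if_pos ⟨he, hl⟩]
      have hjn : (j:ℕ) < n := by
        have := Fin.lt_def.1 (lt_of_le_of_ne (Fin.le_last j) hl)
        simpa using this
      have hset : (Finset.univ.filter fun x : Fin (n+1) =>
          (x:ℕ) + (j:ℕ) ≤ n ∧ (x:ℕ) - 1 = invEntry (n+1) π j)
          = {(⟨0, by omega⟩ : Fin (n+1)), ⟨1, by omega⟩} := by
        ext x
        simp only [Finset.mem_filter, Finset.mem_univ, true_and, Finset.mem_insert,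
          Finset.mem_singleton, he, Fin.ext_iff]
        constructor
        · intro ⟨h1, h2⟩
          omega
        · intro hx
          rcases hx with hx | hx <;> omega
      rw [hset]
      rw [Finset.card_insert_of_notMem (by
        simp only [Finset.mem_singleton, Fin.ext_iff]
        omega), Finset.card_singleton]
  · rw [if_neg (by tauto)]
    have hf2 := tight_bound h j he
    have hset : (Finset.univ.filter fun x : Fin (n+1) =>
        (x:ℕ) + (j:ℕ) ≤ n ∧ (x:ℕ) - 1 = invEntry (n+1) π j)
        = {(⟨invEntry (n+1) π j + 1, by omega⟩ : Fin (n+1))} := by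
      ext x
      simp only [Finset.mem_filter, Finset.mem_univ, true_and, Finset.mem_singleton,
        Fin.ext_iff]
      constructor
      · intro ⟨h1, h2⟩
        omega
      · intro hx
        omega
    rw [hset, Finset.card_singleton]

theorem card_bubbleSort_fiber' (π : Equiv.Perm (Fin (n + 1))) :
    (Finset.univ.filter fun σ : Equiv.Perm (Fin (n + 1)) =>
        bubbleSort (n + 1) σ = π).card =
      if π (Fin.last n) = Fin.last n then 2 ^ (lmax (n + 1) π - 1) else 0 := by
  by_cases h : π (Fin.last n) = Fin.last n
  · rw [if_pos h]
    -- step 1 : fiber ↔ admissible tables whose decrement is the table of π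
    have hstep1 : (Finset.univ.filter fun σ : Equiv.Perm (Fin (n + 1)) =>
        bubbleSort (n + 1) σ = π).card =
        (Finset.univ.filter fun f : Fin (n+1) → Fin (n+1) =>
          ∀ j : Fin (n+1), (f j : ℕ) + (j:ℕ) ≤ n ∧
            (f j : ℕ) - 1 = invEntry (n+1) π j).card := by
      apply Finset.card_bij (fun σ _ => code σ)
      · intro σ hσ
        have hB : bubbleSort (n+1) σ = π := (Finset.mem_filter.1 hσ).2
        refine Finset.mem_filter.2 ⟨Finset.mem_univ _, fun j => ⟨invEntry_bound σ j, ?_⟩⟩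
        have := invEntry_bubbleSort σ j
        rw [hB] at this
        exact this.symm ▸ rfl
      · exact fun a1 _ a2 _ hh => code_inj hh
      · intro f hf
        have hf' := (Finset.mem_filter.1 hf).2
        have hfS : f ∈ S n :=
          Finset.mem_filter.2 ⟨Finset.mem_univ _, fun j => (hf' j).1⟩
        obtain ⟨σ, hσ⟩ := code_surj f hfS
        refine ⟨σ, Finset.mem_filter.2 ⟨Finset.mem_univ _, ?_⟩, hσ⟩
        apply code_injective
        intro j
        rw [invEntry_bubbleSort σ j]
        have hcσ : invEntry (n+1) σ j = (f j : ℕ) := by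
          rw [← hσ]; rfl
        rw [hcσ, (hf' j).2]
    rw [hstep1]
    -- step 2 : product over coordinates
    have hstep2 : (Finset.univ.filter fun f : Fin (n+1) → Fin (n+1) =>
          ∀ j : Fin (n+1), (f j : ℕ) + (j:ℕ) ≤ n ∧
            (f j : ℕ) - 1 = invEntry (n+1) π j).card
        = ∏ j : Fin (n+1), (Finset.univ.filter fun x : Fin (n+1) =>
            (x:ℕ) + (j:ℕ) ≤ n ∧ (x:ℕ) - 1 = invEntry (n+1) π j).card := by
      rw [← Fintype.card_subtype]
      rw [Fintype.card_congr (Equiv.subtypePiEquivPi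
        (p := fun (j : Fin (n+1)) (x : Fin (n+1)) =>
          (x : ℕ) + (j:ℕ) ≤ n ∧ (x:ℕ) - 1 = invEntry (n+1) π j))]
      rw [Fintype.card_pi]
      exact Finset.prod_congr rfl fun j _ => Fintype.card_subtype _
    rw [hstep2]
    have hstep3 : ∏ j : Fin (n+1), (Finset.univ.filter fun x : Fin (n+1) =>
            (x:ℕ) + (j:ℕ) ≤ n ∧ (x:ℕ) - 1 = invEntry (n+1) π j).card
        = ∏ j : Fin (n+1),
            (if invEntry (n+1) π j = 0 ∧ j ≠ Fin.last n then 2 else 1) :=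
      Finset.prod_congr rfl fun j _ => per_coord_card h j
    rw [hstep3, Finset.prod_ite, Finset.prod_const, Finset.prod_const, one_pow, mul_one]
    congr 1
    -- the exponent is lmax - 1
    have hlast : Fin.last n ∈ Finset.univ.filter
        fun j : Fin (n+1) => invEntry (n+1) π j = 0 :=
      Finset.mem_filter.2 ⟨Finset.mem_univ _, invEntry_last π⟩
    have hset : (Finset.univ.filter
        fun j : Fin (n+1) => invEntry (n+1) π j = 0 ∧ j ≠ Fin.last n)
        = (Finset.univ.filter
          fun j : Fin (n+1) => invEntry (n+1) π j = 0).erase (Fin.last n) := by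
      ext j
      simp only [Finset.mem_filter, Finset.mem_univ, true_and, Finset.mem_erase]
      tauto
    rw [hset, Finset.card_erase_of_mem hlast]
    rfl
  · rw [if_neg h, Finset.card_eq_zero, Finset.filter_eq_empty_iff]
    intro σ _
    intro hB
    exact h (hB ▸ BSAux.bubbleSort_apply_last σ)

end BSMain


/-- A permutation `π` of `[n]` has no preimages under bubble sort if its last
entry is not maximal, and `2^(lmax π − 1)` preimages if it is. -/
theorem card_bubbleSort_fiber (n : ℕ) (π : Equiv.Perm (Fin (n + 1))) :
    (Finset.univ.filter fun σ : Equiv.Perm (Fin (n + 1)) =>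
        bubbleSort (n + 1) σ = π).card =
      if π (Fin.last n) = Fin.last n then 2 ^ (lmax (n + 1) π - 1) else 0 :=
  BSMain.card_bubbleSort_fiber' π
end

section
/- For each n ≥ 2, the degree of the nibble sort map nib : {0,1}ⁿ → {0,1}ⁿ is 3/2; equivalently, Σ_{w∈{0,1}ⁿ} |nib⁻¹(w)|² = 3·2^(n−1). Moreover, exactly 2^(n−1) words have exactly one preimage, exactly 2^(n−2) words have exactly two preimages, and no word has more than two preimages. -/
/-- Extend a binary word of length `n` by `1`s beyond its end (so that no new
occurrence of the factor `10` is created). Here `true` plays the role of the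
letter `1` and `false` the role of `0`. -/
def extWord (n : ℕ) (w : Fin n → Bool) : ℕ → Bool :=
  fun j => if h : j < n then w ⟨j, h⟩ else true

/-- The nibble sort map on binary words: replace the leftmost occurrence of the
factor `10` by `01`; if there is no such factor, do nothing. -/
def nib (n : ℕ) (w : Fin n → Bool) : Fin n → Bool :=
  letI D : Finset (Fin n) := Finset.univ.filter fun i : Fin n =>
    extWord n w i = true ∧ extWord n w ((i : ℕ) + 1) = false
  if h : D.Nonempty then
    letI i := D.min' h
    fun j => if j = i then false else if (j : ℕ) = (i : ℕ) + 1 then true else w j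
  else w

namespace NibAux

variable {n : ℕ}

lemma ext_lt (w : Fin n → Bool) {j : ℕ} (h : j < n) : extWord n w j = w ⟨j, h⟩ :=
  dif_pos h

lemma ext_ge (w : Fin n → Bool) {j : ℕ} (h : n ≤ j) : extWord n w j = true :=
  dif_neg (by omega)

lemma lt_of_ext_false {w : Fin n → Bool} {j : ℕ} (h : extWord n w j = false) : j < n := by
  by_contra hc
  rw [ext_ge w (by omega)] at h
  exact absurd h (by simp)

lemma eq_iff_ext {v w : Fin n → Bool} : v = w ↔ ∀ j, extWord n v j = extWord n w j := by
  constructor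
  · rintro rfl j; rfl
  · intro h
    funext j
    have := h (j : ℕ)
    rwa [ext_lt v j.isLt, ext_lt w j.isLt] at this

def Desc (n : ℕ) (w : Fin n → Bool) (i : ℕ) : Prop :=
  extWord n w i = true ∧ extWord n w (i + 1) = false

instance (w : Fin n → Bool) : DecidablePred (Desc n w) := fun _ => by
  unfold Desc; infer_instance

lemma desc_lt {w : Fin n → Bool} {i : ℕ} (h : Desc n w i) : i + 1 < n :=
  lt_of_ext_false h.2

def Srt (n : ℕ) (w : Fin n → Bool) : Prop := ∀ i, ¬ Desc n w i

lemma mono {w : Fin n → Bool} {K a b : ℕ} (h : ∀ m, m + 1 < K → ¬ Desc n w m)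
    (hab : a ≤ b) (hb : b < K) (ha : extWord n w a = true) : extWord n w b = true := by
  induction b with
  | zero =>
      have : a = 0 := by omega
      rwa [this] at ha
  | succ b ih =>
      rcases Nat.lt_or_ge a (b+1) with hlt | hge
      · have hb' : extWord n w b = true := ih (by omega) (by omega)
        have hnd := h b (by omega)
        unfold Desc at hnd
        rcases Bool.eq_false_or_eq_true (extWord n w (b+1)) with ht | hf
        · exact ht
        · exact absurd ⟨hb', hf⟩ hnd
      · have : a = b + 1 := by omega
        rwa [this] at ha


def sw (n : ℕ) (w : Fin n → Bool) (i : ℕ) (x y : Bool) : Fin n → Bool :=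
  fun j => if (j : ℕ) = i then x else if (j : ℕ) = i + 1 then y else w j

lemma ext_sw {w : Fin n → Bool} {i : ℕ} (h : i + 1 < n) (x y : Bool) (m : ℕ) :
    extWord n (sw n w i x y) m =
      if m = i then x else if m = i + 1 then y else extWord n w m := by
  by_cases hm : m < n
  · rw [ext_lt _ hm, ext_lt w hm]
    rfl
  · rw [ext_ge _ (by omega), ext_ge w (by omega)]
    rw [if_neg (by omega), if_neg (by omega)]

lemma trans_uniq {w : Fin n → Bool} {K i j : ℕ} (h : ∀ m, m + 1 < K → ¬ Desc n w m)
    (hi : i < K) (hj : j < K)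
    (ti1 : extWord n w i = false) (ti2 : extWord n w (i+1) = true)
    (tj1 : extWord n w j = false) (tj2 : extWord n w (j+1) = true) : i = j := by
  rcases lt_trichotomy i j with hlt | he | hgt
  · have := mono h (a := i+1) (b := j) (by omega) hj ti2
    rw [this] at tj1; exact absurd tj1 (by simp)
  · exact he
  · have := mono h (a := j+1) (b := i) (by omega) hi tj2
    rw [this] at ti1; exact absurd ti1 (by simp)

lemma exists_trans {w : Fin n → Bool} {a b : ℕ} (hab : a ≤ b)
    (ha : extWord n w a = false) (hb : extWord n w b = true) :
    ∃ i, a ≤ i ∧ i < b ∧ extWord n w i = false ∧ extWord n w (i+1) = true := by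
  induction b with
  | zero =>
      have : a = 0 := by omega
      rw [this] at ha; rw [ha] at hb; exact absurd hb (by simp)
  | succ b ih =>
      rcases Nat.lt_or_ge a (b+1) with hlt | hge
      · rcases Bool.eq_false_or_eq_true (extWord n w b) with ht | hf
        · obtain ⟨i, h1, h2, h3, h4⟩ := ih (by omega) ht
          exact ⟨i, h1, by omega, h3, h4⟩
        · exact ⟨b, by omega, by omega, hf, hb⟩
      · have : a = b + 1 := by omega
        rw [this] at ha; rw [ha] at hb; exact absurd hb (by simp)

/-- the descent finset used in `nib` -/
lemma nib_D_nonempty_iff (w : Fin n → Bool) :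
    (Finset.univ.filter fun i : Fin n =>
      extWord n w i = true ∧ extWord n w ((i : ℕ) + 1) = false).Nonempty ↔
      ∃ i, Desc n w i := by
  constructor
  · rintro ⟨i, hi⟩
    rw [Finset.mem_filter] at hi
    exact ⟨(i : ℕ), hi.2⟩
  · rintro ⟨i, hi⟩
    have h2 := desc_lt hi
    exact ⟨⟨i, by omega⟩, Finset.mem_filter.mpr ⟨Finset.mem_univ _, hi⟩⟩

lemma nib_eq_of_srt {w : Fin n → Bool} (h : Srt n w) : nib n w = w := by
  unfold nib
  rw [dif_neg]
  rw [nib_D_nonempty_iff]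
  rintro ⟨i, hi⟩
  exact h i hi

lemma nib_eq_of_desc {w : Fin n → Bool} (h : ∃ i, Desc n w i) :
    nib n w = sw n w (Nat.find h) false true := by
  unfold nib
  have hne : (Finset.univ.filter fun i : Fin n =>
      extWord n w i = true ∧ extWord n w ((i : ℕ) + 1) = false).Nonempty :=
    (nib_D_nonempty_iff w).mpr h
  rw [dif_pos hne]
  have hfind := Nat.find_spec h
  have hfl : Nat.find h + 1 < n := desc_lt hfind
  have hmem : (⟨Nat.find h, by omega⟩ : Fin n) ∈ (Finset.univ.filter fun i : Fin n =>
      extWord n w i = true ∧ extWord n w ((i : ℕ) + 1) = false) :=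
    Finset.mem_filter.mpr ⟨Finset.mem_univ _, hfind⟩
  have hval : (((Finset.univ.filter fun i : Fin n =>
      extWord n w i = true ∧ extWord n w ((i : ℕ) + 1) = false).min' hne : Fin n) : ℕ)
      = Nat.find h := by
    apply le_antisymm
    · exact_mod_cast Finset.min'_le _ _ hmem
    · apply Nat.find_min' h
      have := Finset.min'_mem _ hne
      exact (Finset.mem_filter.mp this).2
  funext j
  simp only [sw, Fin.ext_iff, hval]

lemma srt_of_not_exists {w : Fin n → Bool} (h : ¬ ∃ i, Desc n w i) : Srt n w :=
  fun i hi => h ⟨i, hi⟩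

def C (n : ℕ) (w : Fin n → Bool) (i : ℕ) : Prop :=
  i + 1 < n ∧ extWord n w i = false ∧ extWord n w (i+1) = true ∧
    ∀ k, k + 1 < i → ¬ Desc n w k

lemma preimage_iff {w v : Fin n → Bool} :
    nib n v = w ↔ (Srt n w ∧ v = w) ∨ ∃ i, C n w i ∧ v = sw n w i true false := by
  constructor
  · intro hnib
    by_cases hs : ∃ i, Desc n v i
    · right
      set p := Nat.find hs with hp
      have hspec : Desc n v p := Nat.find_spec hs
      have hmin : ∀ k, k < p → ¬ Desc n v k := fun k hk => Nat.find_min hs hk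
      have hpl : p + 1 < n := desc_lt hspec
      have hw : w = sw n v p false true := by rw [← hnib, nib_eq_of_desc hs]
      have hext : ∀ m, extWord n w m =
          if m = p then false else if m = p + 1 then true else extWord n v m := by
        intro m; rw [hw]; exact ext_sw hpl _ _ m
      refine ⟨p, ⟨hpl, ?_, ?_, ?_⟩, ?_⟩
      · rw [hext]; simp
      · rw [hext, if_neg (by omega), if_pos rfl]
      · intro k hk hdk
        obtain ⟨hk1, hk2⟩ := hdk
        rw [hext, if_neg (by omega), if_neg (by omega)] at hk1
        rw [hext, if_neg (by omega), if_neg (by omega)] at hk2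
        exact hmin k (by omega) ⟨hk1, hk2⟩
      · rw [eq_iff_ext]
        intro m
        rw [ext_sw hpl, hext]
        rcases eq_or_ne m p with rfl | h1
        · simp [hspec.1]
        · rcases eq_or_ne m (p + 1) with rfl | h2
          · simp [h1, hspec.2]
          · simp [h1, h2]
    · left
      have hsrt := srt_of_not_exists hs
      rw [nib_eq_of_srt hsrt] at hnib
      exact ⟨hnib ▸ hsrt, hnib⟩
  · rintro (⟨hs, rfl⟩ | ⟨i, ⟨hin, hi1, hi2, hi3⟩, rfl⟩)
    · exact nib_eq_of_srt hs
    · set v := sw n w i true false with hv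
      have hvext : ∀ m, extWord n v m =
          if m = i then true else if m = i + 1 then false else extWord n w m :=
        fun m => ext_sw hin _ _ m
      have hdesc : Desc n v i := by
        constructor
        · rw [hvext]; simp
        · rw [hvext, if_neg (by omega), if_pos rfl]
      have hex : ∃ k, Desc n v k := ⟨i, hdesc⟩
      have hfind : Nat.find hex = i := by
        apply le_antisymm (Nat.find_min' hex hdesc)
        by_contra hc
        push_neg at hc
        have hd := Nat.find_spec hex
        set k := Nat.find hex with hk
        obtain ⟨hd1, hd2⟩ := hd
        by_cases hki : k + 1 = i
        · rw [hvext, if_pos hki] at hd2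
          exact absurd hd2 (by simp)
        · rw [hvext, if_neg (by omega), if_neg (by omega)] at hd1
          rw [hvext, if_neg hki, if_neg (by omega)] at hd2
          exact hi3 k (by omega) ⟨hd1, hd2⟩
      rw [nib_eq_of_desc hex, hfind, eq_iff_ext]
      intro m
      rw [ext_sw hin, hvext]
      rcases eq_or_ne m i with rfl | h1
      · simp [hi1]
      · rcases eq_or_ne m (i + 1) with rfl | h2
        · simp [h1, hi2]
        · simp [h1, h2]


instance (w : Fin n → Bool) : DecidablePred (C n w) := fun i => by
  unfold C
  have : (∀ k, k + 1 < i → ¬ Desc n w k) ↔ (∀ k < i, k + 1 < i → ¬ Desc n w k) := by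
    constructor
    · intro h k _ hk; exact h k hk
    · intro h k hk; exact h k (by omega) hk
  rw [this]
  infer_instance

def CF (n : ℕ) (w : Fin n → Bool) : Finset ℕ := (Finset.range n).filter (C n w)

lemma mem_CF {w : Fin n → Bool} {i : ℕ} : i ∈ CF n w ↔ C n w i := by
  unfold CF
  rw [Finset.mem_filter, Finset.mem_range]
  exact ⟨fun h => h.2, fun h => ⟨by have := h.1; omega, h⟩⟩

noncomputable instance : Decidable (Srt n w) := Classical.propDecidable _

lemma F_card (w : Fin n → Bool) :
    (Finset.univ.filter fun v : Fin n → Bool => nib n v = w).card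
      = (if Srt n w then 1 else 0) + (CF n w).card := by
  classical
  have hset : (Finset.univ.filter fun v : Fin n → Bool => nib n v = w)
      = (if Srt n w then {w} else ∅) ∪ (CF n w).image (fun i => sw n w i true false) := by
    ext v
    rw [Finset.mem_filter, Finset.mem_union, Finset.mem_image]
    constructor
    · rintro ⟨-, hv⟩
      rcases preimage_iff.mp hv with ⟨hs, rfl⟩ | ⟨i, hi, rfl⟩
      · left; rw [if_pos hs]; exact Finset.mem_singleton_self _
      · right; exact ⟨i, mem_CF.mpr hi, rfl⟩
    · rintro (hv | ⟨i, hi, rfl⟩)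
      · by_cases hs : Srt n w
        · rw [if_pos hs, Finset.mem_singleton] at hv
          subst hv
          exact ⟨Finset.mem_univ _, preimage_iff.mpr (Or.inl ⟨hs, rfl⟩)⟩
        · rw [if_neg hs] at hv; exact absurd hv (Finset.notMem_empty _)
      · exact ⟨Finset.mem_univ _,
          preimage_iff.mpr (Or.inr ⟨i, mem_CF.mp hi, rfl⟩)⟩
  rw [hset]
  have hswne : ∀ i, C n w i → sw n w i true false ≠ w := by
    intro i hi heq
    have h2 : extWord n (sw n w i true false) i = extWord n w i := by rw [heq]
    rw [ext_sw hi.1, if_pos rfl, hi.2.1] at h2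
    exact absurd h2 (by simp)
  have hinj : Set.InjOn (fun i => sw n w i true false) (CF n w) := by
    intro i hi j hj heq
    by_contra hne
    have hci := mem_CF.mp hi
    have hcj := mem_CF.mp hj
    have h2 : extWord n (sw n w i true false) i = extWord n (sw n w j true false) i := by
      rw [show sw n w i true false = sw n w j true false from heq]
    rw [ext_sw hci.1, ext_sw hcj.1, if_pos rfl, if_neg hne] at h2
    rcases eq_or_ne i (j+1) with h1 | h1
    · rw [if_pos h1] at h2
      exact absurd h2 (by simp)
    · rw [if_neg h1, hci.2.1] at h2
      exact absurd h2 (by simp)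
  rw [Finset.card_union_of_disjoint, Finset.card_image_of_injOn hinj]
  · congr 1
    by_cases hs : Srt n w
    · rw [if_pos hs, if_pos hs, Finset.card_singleton]
    · rw [if_neg hs, if_neg hs, Finset.card_empty]
  · rw [Finset.disjoint_left]
    intro a ha hb
    by_cases hs : Srt n w
    · rw [if_pos hs, Finset.mem_singleton] at ha
      subst ha
      obtain ⟨i, hi, heq⟩ := Finset.mem_image.mp hb
      exact hswne i (mem_CF.mp hi) heq
    · rw [if_neg hs] at ha; exact absurd ha (Finset.notMem_empty _)

lemma CF_card_le (w : Fin n → Bool) : (CF n w).card ≤ 2 := by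
  by_contra hc
  push_neg at hc
  obtain ⟨a, b, c, ha, hb, hcm, hab, hac, hbc⟩ := Finset.two_lt_card_iff.mp hc
  have key : ∀ i j k, C n w i → C n w j → C n w k → i < j → j < k → False := by
    intro i j k hi hj hk hij hjk
    have := mono (h := hk.2.2.2) (a := i+1) (b := j) (by omega) hjk hi.2.2.1
    rw [hj.2.1] at this
    exact absurd this (by simp)
  have ha' := mem_CF.mp ha
  have hb' := mem_CF.mp hb
  have hc' := mem_CF.mp hcm
  rcases lt_trichotomy a b with h1 | h1 | h1
  · rcases lt_trichotomy b c with h2 | h2 | h2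
    · exact key a b c ha' hb' hc' h1 h2
    · exact hbc h2
    · rcases lt_trichotomy a c with h3 | h3 | h3
      · exact key a c b ha' hc' hb' h3 h2
      · exact hac h3
      · exact key c a b hc' ha' hb' h3 h1
  · exact hab h1
  · rcases lt_trichotomy a c with h2 | h2 | h2
    · exact key b a c hb' ha' hc' h1 h2
    · exact hac h2
    · rcases lt_trichotomy b c with h3 | h3 | h3
      · exact key b c a hb' hc' ha' h3 h2
      · exact hbc h3
      · exact key c b a hc' hb' ha' h3 h1

lemma CF_card_le_one_of_srt {w : Fin n → Bool} (hs : Srt n w) : (CF n w).card ≤ 1 := by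
  apply Finset.card_le_one.mpr
  intro i hi j hj
  have hci := mem_CF.mp hi
  have hcj := mem_CF.mp hj
  exact trans_uniq (K := max i j + 1) (fun m _ => hs m) (by omega) (by omega)
    hci.2.1 hci.2.2.1 hcj.2.1 hcj.2.2.1

lemma F_le (w : Fin n → Bool) :
    (Finset.univ.filter fun v : Fin n → Bool => nib n v = w).card ≤ 2 := by
  rw [F_card]
  by_cases hs : Srt n w
  · rw [if_pos hs]
    have := CF_card_le_one_of_srt hs
    omega
  · rw [if_neg hs]
    have := CF_card_le w
    omega


def hasDesc (n : ℕ) (w : Fin n → Bool) : Prop := ∃ i, Desc n w i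

instance (w : Fin n → Bool) : Decidable (hasDesc n w) :=
  decidable_of_iff (∃ i < n, Desc n w i)
    ⟨fun ⟨i, _, h⟩ => ⟨i, h⟩, fun ⟨i, h⟩ => ⟨i, by have := desc_lt h; omega, h⟩⟩

def psi (n : ℕ) (u : Fin (n-2) → Bool) : Fin n → Bool :=
  if h : hasDesc (n-2) u then
    fun j => if (j : ℕ) = 0 then false
      else if (j : ℕ) ≤ Nat.find h + 2 then extWord (n-2) u ((j : ℕ)-1)
      else if (j : ℕ) = Nat.find h + 3 then true
      else extWord (n-2) u ((j : ℕ)-2)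
  else fun j => if (j : ℕ) = 0 then false else if (j : ℕ) = n-1 then true
      else extWord (n-2) u ((j : ℕ)-1)

def phi (n : ℕ) (w : Fin n → Bool) : Fin (n-2) → Bool :=
  if h : hasDesc n w then
    fun j => if (j : ℕ) ≤ Nat.find h then extWord n w ((j : ℕ)+1)
      else extWord n w ((j : ℕ)+2)
  else fun j => extWord n w ((j : ℕ)+1)

lemma ext_psi_srt {u : Fin (n-2) → Bool} (hs : ¬ hasDesc (n-2) u) {j : ℕ} (hj : j < n) :
    extWord n (psi n u) j =
      if j = 0 then false else if j = n-1 then true else extWord (n-2) u (j-1) := by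
  rw [ext_lt _ hj]
  unfold psi
  rw [dif_neg hs]

lemma ext_psi_desc {u : Fin (n-2) → Bool} (hs : hasDesc (n-2) u) {j : ℕ} (hj : j < n) :
    extWord n (psi n u) j =
      if j = 0 then false
      else if j ≤ Nat.find hs + 2 then extWord (n-2) u (j-1)
      else if j = Nat.find hs + 3 then true
      else extWord (n-2) u (j-2) := by
  rw [ext_lt _ hj]
  unfold psi
  rw [dif_pos hs]

lemma ext_phi_desc {w : Fin n → Bool} (hs : hasDesc n w) {j : ℕ} (hj : j < n - 2) :
    extWord (n-2) (phi n w) j =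
      if j ≤ Nat.find hs then extWord n w (j+1) else extWord n w (j+2) := by
  rw [ext_lt _ hj]
  unfold phi
  rw [dif_pos hs]

lemma ext_phi_srt {w : Fin n → Bool} (hs : ¬ hasDesc n w) {j : ℕ} (hj : j < n - 2) :
    extWord (n-2) (phi n w) j = extWord n w (j+1) := by
  rw [ext_lt _ hj]
  unfold phi
  rw [dif_neg hs]


lemma psi_srt_props (hn : 2 ≤ n) {u : Fin (n-2) → Bool} (hs : ¬ hasDesc (n-2) u) :
    Srt n (psi n u) ∧ (CF n (psi n u)).card = 1 := by
  set w := psi n u with hw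
  have hsrt : Srt n w := by
    rintro i ⟨h1, h2⟩
    have hi1 : i + 1 < n := lt_of_ext_false h2
    rw [ext_psi_srt hs hi1] at h2
    rw [if_neg (by omega)] at h2
    by_cases he : i + 1 = n - 1
    · rw [if_pos he] at h2; exact absurd h2 (by simp)
    rw [if_neg he] at h2
    have hiu : i + 1 - 1 < n - 2 := lt_of_ext_false h2
    rw [ext_psi_srt hs (by omega)] at h1
    by_cases hz : i = 0
    · rw [if_pos hz] at h1; exact absurd h1 (by simp)
    rw [if_neg hz, if_neg (by omega)] at h1
    refine hs ⟨i - 1, h1, ?_⟩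
    have : i - 1 + 1 = i + 1 - 1 := by omega
    rw [this]
    exact h2
  have h0 : extWord n w 0 = false := by
    rw [ext_psi_srt hs (by omega), if_pos rfl]
  have hlast : extWord n w (n-1) = true := by
    rw [ext_psi_srt hs (by omega), if_neg (by omega), if_pos rfl]
  obtain ⟨i0, -, hi0b, t1, t2⟩ := exists_trans (a := 0) (b := n-1) (by omega) h0 hlast
  have hC : C n w i0 := ⟨by omega, t1, t2, fun k _ => hsrt k⟩
  refine ⟨hsrt, le_antisymm (CF_card_le_one_of_srt hsrt) ?_⟩
  exact Finset.card_pos.mpr ⟨i0, mem_CF.mpr hC⟩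

lemma psi_desc_props (hn : 2 ≤ n) {u : Fin (n-2) → Bool} (hd : hasDesc (n-2) u) :
    ¬ Srt n (psi n u) ∧ (CF n (psi n u)).card = 2 := by
  set w := psi n u with hw
  set q := Nat.find hd with hq
  have hspec : Desc (n-2) u q := Nat.find_spec hd
  have hqmin : ∀ k, k < q → ¬ Desc (n-2) u k := fun k hk => Nat.find_min hd hk
  have hq2 : q + 1 < n - 2 := desc_lt hspec
  have h0 : extWord n w 0 = false := by
    rw [ext_psi_desc hd (by omega), if_pos rfl]
  have hmid : ∀ j, 1 ≤ j → j ≤ q + 2 → extWord n w j = extWord (n-2) u (j-1) := by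
    intro j hj1 hj2
    rw [ext_psi_desc hd (by omega), if_neg (by omega), if_pos (by omega)]
  have hq3 : extWord n w (q+3) = true := by
    rw [ext_psi_desc hd (by omega), if_neg (by omega), if_neg (by omega), if_pos rfl]
  have hhigh : ∀ j, q + 4 ≤ j → j < n → extWord n w j = extWord (n-2) u (j-2) := by
    intro j hj1 hj2
    rw [ext_psi_desc hd hj2, if_neg (by omega), if_neg (by omega), if_neg (by omega)]
  have hwq1 : extWord n w (q+1) = true := by
    rw [hmid (q+1) (by omega) (by omega)]
    have : q + 1 - 1 = q := by omega
    rw [this]; exact hspec.1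
  have hwq2 : extWord n w (q+2) = false := by
    rw [hmid (q+2) (by omega) (by omega)]
    have : q + 2 - 1 = q + 1 := by omega
    rw [this]; exact hspec.2
  have hdw : Desc n w (q+1) := ⟨hwq1, hwq2⟩
  have hmin : ∀ k, k < q + 1 → ¬ Desc n w k := by
    rintro k hk ⟨hk1, hk2⟩
    by_cases hz : k = 0
    · rw [hz, h0] at hk1; exact absurd hk1 (by simp)
    · rw [hmid k (by omega) (by omega)] at hk1
      rw [hmid (k+1) (by omega) (by omega)] at hk2
      have he : k + 1 - 1 = k - 1 + 1 := by omega
      rw [he] at hk2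
      exact hqmin (k-1) (by omega) ⟨hk1, hk2⟩
  have hnsrt : ¬ Srt n w := fun h => h (q+1) hdw
  have hCq : C n w (q+2) := ⟨by omega, hwq2, hq3, fun k hk => hmin k (by omega)⟩
  obtain ⟨i0, -, hi0b, t1, t2⟩ := exists_trans (a := 0) (b := q+1) (by omega) h0 hwq1
  have hCi : C n w i0 := ⟨by omega, t1, t2, fun k hk => hmin k (by omega)⟩
  have hset : CF n w = {i0, q+2} := by
    ext j
    rw [mem_CF, Finset.mem_insert, Finset.mem_singleton]
    constructor
    · intro hj
      have hjle : j ≤ q + 2 := by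
        by_contra hc
        exact hj.2.2.2 (q+1) (by omega) hdw
      rcases eq_or_ne j (q+2) with h | h
      · right; exact h
      · left
        have hjq : j ≠ q + 1 := by
          intro he
          have h3 := hj.2.1
          rw [he, hwq1] at h3
          exact absurd h3 (by simp)
        exact trans_uniq (K := q+1) (fun m hm => hmin m (by omega)) (by omega) (by omega)
          hj.2.1 hj.2.2.1 t1 t2
    · rintro (rfl | rfl)
      · exact hCi
      · exact hCq
  refine ⟨hnsrt, ?_⟩
  rw [hset, Finset.card_insert_of_notMem (by
    rw [Finset.mem_singleton]; omega), Finset.card_singleton]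


lemma phi_psi_srt (hn : 2 ≤ n) {u : Fin (n-2) → Bool} (hs : ¬ hasDesc (n-2) u) :
    phi n (psi n u) = u := by
  set w := psi n u with hw
  have hsrt : Srt n w := (psi_srt_props hn hs).1
  have hwn : ¬ hasDesc n w := fun ⟨i, hi⟩ => hsrt i hi
  rw [eq_iff_ext]
  intro m
  by_cases hm : m < n - 2
  · rw [ext_phi_srt hwn hm, ext_psi_srt hs (by omega), if_neg (by omega),
      if_neg (by omega), Nat.add_sub_cancel]
  · rw [ext_ge _ (by omega), ext_ge _ (by omega)]

lemma phi_psi_desc (hn : 2 ≤ n) {u : Fin (n-2) → Bool} (hd : hasDesc (n-2) u) :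
    phi n (psi n u) = u := by
  set w := psi n u with hw
  set q := Nat.find hd with hq
  have hspec : Desc (n-2) u q := Nat.find_spec hd
  have hqmin : ∀ k, k < q → ¬ Desc (n-2) u k := fun k hk => Nat.find_min hd hk
  have hq2 : q + 1 < n - 2 := desc_lt hspec
  have h0 : extWord n w 0 = false := by
    rw [ext_psi_desc hd (by omega), if_pos rfl]
  have hmid : ∀ j, 1 ≤ j → j ≤ q + 2 → extWord n w j = extWord (n-2) u (j-1) := by
    intro j hj1 hj2
    rw [ext_psi_desc hd (by omega), if_neg (by omega), if_pos (by omega)]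
  have hhigh : ∀ j, q + 4 ≤ j → j < n → extWord n w j = extWord (n-2) u (j-2) := by
    intro j hj1 hj2
    rw [ext_psi_desc hd hj2, if_neg (by omega), if_neg (by omega), if_neg (by omega)]
  have hwq1 : extWord n w (q+1) = true := by
    rw [hmid (q+1) (by omega) (by omega)]
    have he : q + 1 - 1 = q := by omega
    rw [he]; exact hspec.1
  have hwq2 : extWord n w (q+2) = false := by
    rw [hmid (q+2) (by omega) (by omega)]
    have he : q + 2 - 1 = q + 1 := by omega
    rw [he]; exact hspec.2
  have hmin : ∀ k, k < q + 1 → ¬ Desc n w k := by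
    rintro k hk ⟨hk1, hk2⟩
    by_cases hz : k = 0
    · rw [hz, h0] at hk1; exact absurd hk1 (by simp)
    · rw [hmid k (by omega) (by omega)] at hk1
      rw [hmid (k+1) (by omega) (by omega)] at hk2
      have he : k + 1 - 1 = k - 1 + 1 := by omega
      rw [he] at hk2
      exact hqmin (k-1) (by omega) ⟨hk1, hk2⟩
  have hdn : hasDesc n w := ⟨q+1, hwq1, hwq2⟩
  have hfind : Nat.find hdn = q + 1 := by
    apply le_antisymm (Nat.find_min' hdn ⟨hwq1, hwq2⟩)
    by_contra hc
    push_neg at hc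
    exact hmin _ hc (Nat.find_spec hdn)
  rw [eq_iff_ext]
  intro m
  by_cases hm : m < n - 2
  · rw [ext_phi_desc hdn hm, hfind]
    by_cases hmq : m ≤ q + 1
    · rw [if_pos hmq, hmid (m+1) (by omega) (by omega), Nat.add_sub_cancel]
    · rw [if_neg hmq, hhigh (m+2) (by omega) (by omega), Nat.add_sub_cancel]
  · rw [ext_ge _ (by omega), ext_ge _ (by omega)]

lemma psi_phi (hn : 2 ≤ n) {w : Fin n → Bool}
    (hF : (if Srt n w then 1 else 0) + (CF n w).card = 2) :
    psi n (phi n w) = w := by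
  by_cases hs : Srt n w
  · rw [if_pos hs] at hF
    have hcard : (CF n w).card = 1 := by omega
    obtain ⟨i1, hi1⟩ := Finset.card_eq_one.mp hcard
    have hC : C n w i1 := mem_CF.mp (by rw [hi1]; exact Finset.mem_singleton_self _)
    have hwn : ¬ hasDesc n w := fun ⟨i, hi⟩ => hs i hi
    have h0 : extWord n w 0 = false := by
      rcases Bool.eq_false_or_eq_true (extWord n w 0) with ht | hf
      · have := mono (K := i1 + 1) (fun m _ => hs m) (Nat.zero_le i1) (by omega) ht
        rw [hC.2.1] at this
        exact absurd this (by simp)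
      · exact hf
    have hl : extWord n w (n-1) = true := by
      exact mono (K := n) (fun m _ => hs m) (by have := hC.1; omega) (by omega) hC.2.2.1
    have hus : ¬ hasDesc (n-2) (phi n w) := by
      rintro ⟨k, hk1, hk2⟩
      have hkl : k + 1 < n - 2 := lt_of_ext_false hk2
      rw [ext_phi_srt hwn (by omega)] at hk1
      rw [ext_phi_srt hwn (by omega)] at hk2
      exact hs (k+1) ⟨hk1, hk2⟩
    rw [eq_iff_ext]
    intro m
    by_cases hm : m < n
    · rw [ext_psi_srt hus hm]
      by_cases h1 : m = 0
      · rw [if_pos h1, h1, h0]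
      rw [if_neg h1]
      by_cases h2 : m = n - 1
      · rw [if_pos h2, h2, hl]
      rw [if_neg h2, ext_phi_srt hwn (by omega)]
      congr 1
      omega
    · rw [ext_ge _ (by omega), ext_ge _ (by omega)]
  · rw [if_neg hs] at hF
    have hcard : (CF n w).card = 2 := by omega
    obtain ⟨i, j, hne, hset⟩ := Finset.card_eq_two.mp hcard
    have hCi : C n w i := mem_CF.mp (by rw [hset]; exact Finset.mem_insert_self _ _)
    have hCj : C n w j := mem_CF.mp (by
      rw [hset]; exact Finset.mem_insert_of_mem (Finset.mem_singleton_self _))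
    have hd : hasDesc n w := by
      by_contra hc
      exact hs (srt_of_not_exists hc)
    set p := Nat.find hd with hp
    have hspec : Desc n w p := Nat.find_spec hd
    have hpmin : ∀ k, k < p → ¬ Desc n w k := fun k hk => Nat.find_min hd hk
    have hb : ∀ x, C n w x → x ≤ p + 1 := by
      intro x hx
      by_contra hc
      exact hx.2.2.2 p (by omega) hspec
    have hnp : ∀ x, C n w x → x ≠ p := by
      intro x hx he
      have h2 := hx.2.1
      rw [he, hspec.1] at h2
      exact absurd h2 (by simp)
    have huniq : ∀ x y, C n w x → C n w y → x ≤ p → y ≤ p → x = y := by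
      intro x y hx hy hxp hyp
      exact trans_uniq (K := p + 1) (fun m hm => hpmin m (by omega)) (by omega) (by omega)
        hx.2.1 hx.2.2.1 hy.2.1 hy.2.2.1
    have hpair : C n w (p+1) ∧ ∃ i0, i0 ≤ p ∧ C n w i0 := by
      rcases eq_or_ne i (p+1) with h1 | h1
      · have hj : j ≤ p := by
          have := hb j hCj
          have := hnp j hCj
          omega
        exact ⟨h1 ▸ hCi, j, hj, hCj⟩
      · have hi : i ≤ p := by
          have := hb i hCi
          have := hnp i hCi
          omega
        rcases eq_or_ne j (p+1) with h2 | h2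
        · exact ⟨h2 ▸ hCj, i, hi, hCi⟩
        · have hj : j ≤ p := by
            have := hb j hCj
            have := hnp j hCj
            omega
          exact absurd (huniq i j hCi hCj hi hj) hne
    obtain ⟨hCp1, i0, hi0p, hCi0⟩ := hpair
    have hpn : p + 2 < n := hCp1.1
    have hp2 : extWord n w (p+2) = true := hCp1.2.2.1
    have h0 : extWord n w 0 = false := by
      rcases Bool.eq_false_or_eq_true (extWord n w 0) with ht | hf
      · have := mono (K := p+1) (fun m hm => hpmin m (by omega)) (Nat.zero_le i0)
          (by omega) ht
        rw [hCi0.2.1] at this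
        exact absurd this (by simp)
      · exact hf
    have hp1 : 1 ≤ p := by
      by_contra hc
      have : p = 0 := by omega
      rw [this] at hspec
      have h2 := hspec.1
      rw [h0] at h2
      exact absurd h2 (by simp)
    have hmid : ∀ m, m ≤ p → extWord (n-2) (phi n w) m = extWord n w (m+1) := by
      intro m hm
      rw [ext_phi_desc hd (by omega), ← hp, if_pos hm]
    have hhigh : ∀ m, p < m → m < n - 2 → extWord (n-2) (phi n w) m = extWord n w (m+2) := by
      intro m hm1 hm2
      rw [ext_phi_desc hd hm2, ← hp, if_neg (by omega)]
    have hdu : hasDesc (n-2) (phi n w) := by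
      refine ⟨p - 1, ?_, ?_⟩
      · rw [hmid (p-1) (by omega)]
        have he : p - 1 + 1 = p := by omega
        rw [he]; exact hspec.1
      · have he : p - 1 + 1 = p := by omega
        rw [he, hmid p (le_refl p)]
        exact hspec.2
    have hfindu : Nat.find hdu = p - 1 := by
      apply le_antisymm
      · apply Nat.find_min' hdu
        constructor
        · rw [hmid (p-1) (by omega)]
          have he : p - 1 + 1 = p := by omega
          rw [he]; exact hspec.1
        · have he : p - 1 + 1 = p := by omega
          rw [he, hmid p (le_refl p)]
          exact hspec.2
      · by_contra hc
        push_neg at hc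
        obtain ⟨hk1, hk2⟩ := Nat.find_spec hdu
        set k := Nat.find hdu with hk
        rw [hmid k (by omega)] at hk1
        rw [hmid (k+1) (by omega)] at hk2
        exact hpmin (k+1) (by omega) ⟨hk1, hk2⟩
    rw [eq_iff_ext]
    intro m
    by_cases hm : m < n
    · rw [ext_psi_desc hdu hm, hfindu]
      by_cases h1 : m = 0
      · rw [if_pos h1, h1, h0]
      rw [if_neg h1]
      by_cases h2 : m ≤ p - 1 + 2
      · rw [if_pos h2, hmid (m-1) (by omega)]
        congr 1
        omega
      rw [if_neg h2]
      by_cases h3 : m = p - 1 + 3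
      · rw [if_pos h3]
        have he : m = p + 2 := by omega
        rw [he, hp2]
      · rw [if_neg h3, hhigh (m-2) (by omega) (by omega)]
        congr 1
        omega
    · rw [ext_ge _ (by omega), ext_ge _ (by omega)]


lemma F_psi (hn : 2 ≤ n) (u : Fin (n-2) → Bool) :
    (Finset.univ.filter fun v : Fin n → Bool => nib n v = psi n u).card = 2 := by
  rw [F_card]
  by_cases hd : hasDesc (n-2) u
  · obtain ⟨h1, h2⟩ := psi_desc_props hn hd
    rw [if_neg h1, h2]
  · obtain ⟨h1, h2⟩ := psi_srt_props hn hd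
    rw [if_pos h1, h2]

lemma card_two (hn : 2 ≤ n) :
    (Finset.univ.filter fun w : Fin n → Bool =>
      (Finset.univ.filter fun v : Fin n → Bool => nib n v = w).card = 2).card
      = 2 ^ (n-2) := by
  have key : (Finset.univ.filter fun w : Fin n → Bool =>
      (Finset.univ.filter fun v : Fin n → Bool => nib n v = w).card = 2).card
      = (Finset.univ : Finset (Fin (n-2) → Bool)).card := by
    apply Finset.card_bij' (i := fun w _ => phi n w) (j := fun u _ => psi n u)
    · intro a ha
      exact Finset.mem_univ _
    · intro u _
      rw [Finset.mem_filter]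
      exact ⟨Finset.mem_univ _, F_psi hn u⟩
    · intro w hw
      have h2 := (Finset.mem_filter.mp hw).2
      rw [F_card] at h2
      exact psi_phi hn h2
    · intro u _
      by_cases hd : hasDesc (n-2) u
      · exact phi_psi_desc hn hd
      · exact phi_psi_srt hn hd
  rw [key, Finset.card_univ]
  simp [Fintype.card_fun]

end NibAux

/-- For `n ≥ 2`, the degree of nibble sort on `{0,1}ⁿ` is `3/2`: the sum of the
squared fiber sizes is `3·2^(n−1)`; exactly `2^(n−1)` words have one preimage,
exactly `2^(n−2)` words have two preimages, and no word has more than two. -/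
theorem deg_nib (n : ℕ) (hn : 2 ≤ n) :
    (∑ w : Fin n → Bool,
        (Finset.univ.filter fun v : Fin n → Bool => nib n v = w).card ^ 2)
        = 3 * 2 ^ (n - 1) ∧
    (Finset.univ.filter fun w : Fin n → Bool =>
        (Finset.univ.filter fun v : Fin n → Bool => nib n v = w).card = 1).card
        = 2 ^ (n - 1) ∧
    (Finset.univ.filter fun w : Fin n → Bool =>
        (Finset.univ.filter fun v : Fin n → Bool => nib n v = w).card = 2).card
        = 2 ^ (n - 2) ∧
    ∀ w : Fin n → Bool,
      (Finset.univ.filter fun v : Fin n → Bool => nib n v = w).card ≤ 2 := by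
  have hle : ∀ w : Fin n → Bool,
      (Finset.univ.filter fun v : Fin n → Bool => nib n v = w).card ≤ 2 :=
    fun w => NibAux.F_le w
  have hx2 := NibAux.card_two hn
  set F : (Fin n → Bool) → ℕ :=
    fun w => (Finset.univ.filter fun v : Fin n → Bool => nib n v = w).card with hF
  have hsum1 : ∑ w : Fin n → Bool, F w = 2 ^ n := by
    have h := Finset.card_eq_sum_card_fiberwise
      (f := nib n) (s := Finset.univ) (t := Finset.univ)
      (fun x _ => Finset.mem_univ _)
    rw [Finset.card_univ] at h
    rw [← h]
    simp [Fintype.card_fun]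
  have hpt : ∀ w, F w = (if F w = 1 then 1 else 0) + 2 * (if F w = 2 then 1 else 0) := by
    intro w
    have := hle w
    by_cases h1 : F w = 1
    · simp [h1]
    · by_cases h2 : F w = 2
      · simp [h1, h2]
      · have h0 : F w = 0 := by
          simp only [hF] at h1 h2 ⊢
          omega
        simp [h1, h2, h0]
  have hsq : ∀ w, F w ^ 2 = (if F w = 1 then 1 else 0) + 4 * (if F w = 2 then 1 else 0) := by
    intro w
    have := hle w
    by_cases h1 : F w = 1
    · simp [h1]
    · by_cases h2 : F w = 2
      · simp [h1, h2]
      · have h0 : F w = 0 := by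
          simp only [hF] at h1 h2 ⊢
          omega
        simp [h1, h2, h0]
  have e1 : ∑ w : Fin n → Bool, F w
      = (Finset.univ.filter fun w => F w = 1).card
        + 2 * (Finset.univ.filter fun w => F w = 2).card := by
    rw [Finset.card_filter, Finset.card_filter, Finset.mul_sum, ← Finset.sum_add_distrib]
    exact Finset.sum_congr rfl (fun w _ => hpt w)
  have e2 : ∑ w : Fin n → Bool, F w ^ 2
      = (Finset.univ.filter fun w => F w = 1).card
        + 4 * (Finset.univ.filter fun w => F w = 2).card := by
    rw [Finset.card_filter, Finset.card_filter, Finset.mul_sum, ← Finset.sum_add_distrib]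
    exact Finset.sum_congr rfl (fun w _ => hsq w)
  have hpow4 : (2:ℕ) ^ n = 4 * 2 ^ (n - 2) := by
    have h := pow_add (2:ℕ) (n-2) 2
    rw [Nat.sub_add_cancel hn] at h
    rw [h]
    ring
  have hpow2 : (2:ℕ) ^ (n - 1) = 2 * 2 ^ (n - 2) := by
    have h := pow_add (2:ℕ) (n-2) 1
    rw [show n - 2 + 1 = n - 1 from by omega] at h
    rw [h]
    ring
  have hx1 : (Finset.univ.filter fun w => F w = 1).card = 2 ^ (n - 1) := by
    rw [e1, hx2] at hsum1
    omega
  refine ⟨?_, hx1, hx2, hle⟩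
  rw [e2, hx1, hx2]
  omega
end
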